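/- arXiv:2111.05625 — 4 statements merged into one kernel-verified Lean document; each statement's English description precedes it below -/
import Mathlib

section
/- Let Λ be a Bedford–McMullen carpet with non-uniform vertical fibres, and let φ : {1,…,N} → {1,…,M} be any map with #φ^{−1}(ĵ) = N_ĵ for each ĵ. For a word ī = (i_1,…,i_J) ∈ {1,…,N}^J write A(ī) = (1/J)·∑_{j=1}^J log N_{φ(i_j)}. (a) For every t ∈ [t̲, max_ĵ log N_ĵ): lim_{J→∞} (1/J)·log #{ ī ∈ {1,…,N}^J : A(ī) ≤ t } = min{t, t̄} + log M − I(min{t, t̄}). (b) For every t ∈ (min_ĵ log N_ĵ, t̲): limsup_{J→∞} (1/J)·log #{ ī ∈ {1,…,N}^J : A(ī) ≤ t } ≤ t + log M < t̲ + log M. -/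
open Filter Set MeasureTheory
open scoped ENNReal NNReal Topology

noncomputable section

/-- The data defining a Bedford–McMullen carpet: an `m × n` grid with `n > m ≥ 2` and a
nonempty set `A` of selected rectangles, with more than one nonempty column. -/
structure BMData where
  m : ℕ
  n : ℕ
  two_le_m : 2 ≤ m
  m_lt_n : m < n
  A : Finset (Fin m × Fin n)
  A_nonempty : A.Nonempty
  one_lt_cols : 1 < (A.image Prod.fst).card

namespace BMData

variable (C : BMData)

/-- The affine contraction `f_{(i,j)}` associated to a selected rectangle `(i, j) ∈ A`
(with the grid indexed from `0` rather than from `1`). -/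
def map (p : Fin C.m × Fin C.n) (x : ℝ × ℝ) : ℝ × ℝ :=
  (x.1 / C.m + (p.1 : ℝ) / C.m, x.2 / C.n + (p.2 : ℝ) / C.n)

/-- `Λ` is the attractor of the iterated function system: the unique nonempty compact set
satisfying `Λ = ⋃_{p ∈ A} f_p(Λ)`. -/
def IsAttractor (Λ : Set (ℝ × ℝ)) : Prop :=
  Λ.Nonempty ∧ IsCompact Λ ∧ Λ = ⋃ p ∈ C.A, C.map p '' Λ

/-- The (finite set of) nonempty columns. -/
def cols : Finset (Fin C.m) := C.A.image Prod.fst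

/-- `M`, the number of nonempty columns. -/
def M : ℕ := C.cols.card

/-- `N`, the total number of maps. -/
def N : ℕ := C.A.card

/-- The number `N_î` of maps in column `î`. -/
def colCount (i : Fin C.m) : ℕ := (C.A.filter fun p => p.1 = i).card

/-- Non-uniform vertical fibres: the column counts are not all equal. -/
def NonUniform : Prop :=
  ∃ i ∈ C.cols, ∃ j ∈ C.cols, C.colCount i ≠ C.colCount j

/-- `γ = log n / log m`. -/
def gamma : ℝ := Real.log C.n / Real.log C.m

/-- `t̲ = (1/M) ∑_ĵ log N_ĵ`. -/
def tLow : ℝ := (1 / (C.M : ℝ)) * ∑ j ∈ C.cols, Real.log (C.colCount j)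

/-- `t̄ = ∑_ĵ (N_ĵ/N) log N_ĵ`. -/
def tUp : ℝ := ∑ j ∈ C.cols, ((C.colCount j : ℝ) / (C.N : ℝ)) * Real.log (C.colCount j)

/-- The large deviations rate function
`I(t) = sup_λ (λt − log((1/M) ∑_ĵ N_ĵ^λ))`. -/
def rate (t : ℝ) : ℝ :=
  ⨆ l : ℝ, (l * t - Real.log ((1 / (C.M : ℝ)) * ∑ j ∈ C.cols, (C.colCount j : ℝ) ^ l))

/-- The map `T_s(t) = (s − log M/log m)·log n + γ·I(t)`. -/
def T (s t : ℝ) : ℝ :=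
  (s - Real.log C.M / Real.log C.m) * Real.log C.n + C.gamma * C.rate t

/-- The sequence `t_ℓ(s)`, shifted so that `t_L(s) = tseq s (L - 1)`:
`tseq s 0 = t_1(s) = (s − log M/log m)·log n` and `tseq s (k+1) = T_s (tseq s k)`. -/
def tseq (s : ℝ) : ℕ → ℝ
  | 0 => (s - Real.log C.M / Real.log C.m) * Real.log C.n
  | k + 1 => C.T s (tseq s k)

/-- The Hausdorff dimension of the carpet (Bedford–McMullen formula). -/
def dimH : ℝ :=
  (1 / Real.log C.m) *
    Real.log (∑ j ∈ C.cols, (C.colCount j : ℝ) ^ (Real.log C.m / Real.log C.n))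

/-- The box dimension of the carpet (Bedford–McMullen formula). -/
def dimB : ℝ :=
  Real.log C.N / Real.log C.n + (1 - Real.log C.m / Real.log C.n) * (Real.log C.M / Real.log C.m)

/-- `(M₀, Ñ_1 > ⋯ > Ñ_{M₀}, R_1, …, R_{M₀})` are the parameters of the carpet: `Ñ` lists the
distinct values among the column counts in strictly decreasing order, and `R î` is the number
of nonempty columns whose count equals `Ñ î`. -/
def HasParams (M0 : ℕ) (Nt R : Fin M0 → ℕ) : Prop :=
  (∀ i j : Fin M0, i < j → Nt j < Nt i) ∧
  (∀ i : Fin M0, 0 < R i) ∧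
  (∀ c ∈ C.cols, ∃ i : Fin M0, C.colCount c = Nt i) ∧
  (∀ i : Fin M0, R i = (C.cols.filter fun c => C.colCount c = Nt i).card)

/-- `ψ_{ī|k}(s) = M^{kγ}·n^{−sk}·∏_{ℓ=1}^k N_{i_ℓ}` for a word `ī` of length `J` over the
alphabet of nonempty columns. -/
def psi (s : ℝ) {J : ℕ} (w : Fin J → {c // c ∈ C.cols}) (k : ℕ) : ℝ :=
  (C.M : ℝ) ^ ((k : ℝ) * C.gamma) * (C.n : ℝ) ^ (-(s * (k : ℝ))) *
    ∏ l ∈ Finset.univ.filter (fun l : Fin J => (l : ℕ) < k), (C.colCount (w l).1 : ℝ)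

/-- `Ψ_J(s) = ∑_{ī} min_{0 ≤ k ≤ J} ψ_{ī|k}(s)`. -/
def Psi (J : ℕ) (s : ℝ) : ℝ :=
  ∑ w : Fin J → {c // c ∈ C.cols}, ⨅ k : Fin (J + 1), C.psi s w (k : ℕ)

open Classical in
/-- `∑_{ī : ψ_{ī|J}(s) ≤ 1} ψ_{ī|J}(s)`. -/
def psiSumLe (s : ℝ) (J : ℕ) : ℝ :=
  ∑ w : Fin J → {c // c ∈ C.cols}, if C.psi s w J ≤ 1 then C.psi s w J else 0

/-- `H(Q*_t)`: the maximal entropy of a probability vector `q` on the nonempty columns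
subject to `∑_ĵ q_ĵ log N_ĵ = t`. -/
def entMax (t : ℝ) : ℝ :=
  sSup { h : ℝ | ∃ q : Fin C.m → ℝ, (∀ j, 0 ≤ q j) ∧ (∀ j ∉ C.cols, q j = 0) ∧
    (∑ j ∈ C.cols, q j) = 1 ∧ (∑ j ∈ C.cols, q j * Real.log (C.colCount j)) = t ∧
    h = -∑ j ∈ C.cols, q j * Real.log (q j) }

/-- A probability vector on the nonempty columns. -/
def IsProbVec (p : Fin C.m → ℝ) : Prop :=
  (∀ j, 0 ≤ p j) ∧ (∀ j ∉ C.cols, p j = 0) ∧ (∑ j ∈ C.cols, p j) = 1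

/-- `∑_ĵ p_ĵ log N_ĵ`. -/
def colAvg (p : Fin C.m → ℝ) : ℝ := ∑ j ∈ C.cols, p j * Real.log (C.colCount j)

/-- The relative entropy `H(p‖P)` where `P = (N_1/N, …, N_M/N)`. -/
def relEntP (p : Fin C.m → ℝ) : ℝ :=
  ∑ j ∈ C.cols, p j * Real.log (p j / ((C.colCount j : ℝ) / (C.N : ℝ)))

/-- The relative entropy `H(p‖Q)` where `Q = (1/M, …, 1/M)`. -/
def relEntQ (p : Fin C.m → ℝ) : ℝ :=
  ∑ j ∈ C.cols, p j * Real.log (p j / (1 / (C.M : ℝ)))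

/-- The function `β(ξ)` of the multifractal spectrum of the uniform self-affine measure. -/
def beta (ξ : ℝ) : ℝ :=
  (1 / Real.log C.m) * (-(ξ * Real.log C.N) +
    Real.log (∑ j ∈ C.cols, (C.colCount j : ℝ) ^ (C.gamma⁻¹ + (1 - C.gamma⁻¹) * ξ)))

/-- `f(α) = inf_ξ (αξ + β(ξ))`. -/
def fspec (α : ℝ) : ℝ := ⨅ ξ : ℝ, (α * ξ + C.beta ξ)

end BMData

/-- The lower `θ`-intermediate dimension of a set in a metric space. -/
def lowerInterDim {X : Type*} [MetricSpace X] (θ : ℝ) (F : Set X) : ℝ :=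
  sInf { s : ℝ | 0 ≤ s ∧ ∀ ε > 0, ∀ δ₀ > 0, ∃ δ : ℝ, 0 < δ ∧ δ ≤ δ₀ ∧
    ∃ 𝒰 : Set (Set X), 𝒰.Countable ∧ F ⊆ ⋃₀ 𝒰 ∧
      (∀ U ∈ 𝒰, δ ^ (1 / θ) ≤ Metric.diam U ∧ Metric.diam U ≤ δ) ∧
      (∑' U : 𝒰, ENNReal.ofReal (Metric.diam (U : Set X) ^ s)) ≤ ENNReal.ofReal ε }

/-- The upper `θ`-intermediate dimension of a set in a metric space. -/
def upperInterDim {X : Type*} [MetricSpace X] (θ : ℝ) (F : Set X) : ℝ :=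
  sInf { s : ℝ | 0 ≤ s ∧ ∀ ε > 0, ∃ δ₀ > 0, ∀ δ : ℝ, 0 < δ → δ ≤ δ₀ →
    ∃ 𝒰 : Set (Set X), 𝒰.Countable ∧ F ⊆ ⋃₀ 𝒰 ∧
      (∀ U ∈ 𝒰, δ ^ (1 / θ) ≤ Metric.diam U ∧ Metric.diam U ≤ δ) ∧
      (∑' U : 𝒰, ENNReal.ofReal (Metric.diam (U : Set X) ^ s)) ≤ ENNReal.ofReal ε }

/-- The topological support of a Borel measure: the set of points all of whose
neighbourhoods have positive measure. -/
def measSupport {X : Type*} [MetricSpace X] [MeasurableSpace X] (μ : Measure X) : Set X :=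
  { x | ∀ r : ℝ, 0 < r → 0 < μ (Metric.ball x r) }

/-- `S^s_{δ,θ}(F)`: the infimal `s`-cost of a countable cover of `F` by sets of diameter
between `δ^{1/θ}` and `δ`. -/
def interCost {X : Type*} [MetricSpace X] (F : Set X) (θ s δ : ℝ) : ℝ≥0∞ :=
  sInf { c : ℝ≥0∞ | ∃ 𝒰 : Set (Set X), 𝒰.Countable ∧ F ⊆ ⋃₀ 𝒰 ∧
    (∀ U ∈ 𝒰, δ ^ (1 / θ) ≤ Metric.diam U ∧ Metric.diam U ≤ δ) ∧
    c = ∑' U : 𝒰, ENNReal.ofReal (Metric.diam (U : Set X) ^ s) }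

namespace S14

open Real Finset

variable (C : BMData)

/-- `log N_c` as a real. -/
def Lg (c : Fin C.m) : ℝ := Real.log (C.colCount c)

/-- The partition function `Z(x) = ∑_{c ∈ cols} N_c^x`. -/
def Z (x : ℝ) : ℝ := ∑ c ∈ C.cols, (C.colCount c : ℝ) ^ x

/-- Numerator of the derivative of `log Z`. -/
def Znum (x : ℝ) : ℝ := ∑ c ∈ C.cols, (C.colCount c : ℝ) ^ x * Lg C c

/-- `m(x) = (log Z)'(x)`, the tilted mean of `log N_c`. -/
def mex (x : ℝ) : ℝ := Znum C x / Z C x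

lemma cols_nonempty : C.cols.Nonempty := C.A_nonempty.image _

lemma one_lt_M : 1 < C.M := C.one_lt_cols

lemma M_pos : (0:ℝ) < (C.M : ℝ) := by
  have := one_lt_M C
  have : 0 < C.M := Nat.lt_of_lt_of_le Nat.zero_lt_one this.le
  exact_mod_cast this

lemma colCount_pos_iff (c : Fin C.m) : 0 < C.colCount c ↔ c ∈ C.cols := by
  rw [BMData.colCount, Finset.card_pos]
  constructor
  · rintro ⟨p, hp⟩
    rw [Finset.mem_filter] at hp
    exact hp.2 ▸ Finset.mem_image_of_mem _ hp.1
  · intro hc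
    rcases Finset.mem_image.mp hc with ⟨p, hp, rfl⟩
    exact ⟨p, Finset.mem_filter.mpr ⟨hp, rfl⟩⟩

lemma one_le_ncol {c : Fin C.m} (hc : c ∈ C.cols) : (1:ℝ) ≤ (C.colCount c : ℝ) := by
  exact_mod_cast (colCount_pos_iff C c).mpr hc

lemma ncol_pos {c : Fin C.m} (hc : c ∈ C.cols) : (0:ℝ) < (C.colCount c : ℝ) :=
  lt_of_lt_of_le one_pos (one_le_ncol C hc)

lemma Lg_nonneg {c : Fin C.m} (hc : c ∈ C.cols) : 0 ≤ Lg C c :=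
  Real.log_nonneg (one_le_ncol C hc)

lemma Z_pos (x : ℝ) : 0 < Z C x :=
  Finset.sum_pos (fun c hc => Real.rpow_pos_of_pos (ncol_pos C hc) x) (cols_nonempty C)

lemma Zeq (x : ℝ) : Z C x = ∑ c ∈ C.cols, Real.exp (x * Lg C c) := by
  refine Finset.sum_congr rfl fun c hc => ?_
  rw [Real.rpow_def_of_pos (ncol_pos C hc), mul_comm]
  rfl

lemma Znum_eq (x : ℝ) : Znum C x = ∑ c ∈ C.cols, Real.exp (x * Lg C c) * Lg C c := by
  refine Finset.sum_congr rfl fun c hc => ?_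
  rw [Real.rpow_def_of_pos (ncol_pos C hc), mul_comm x]
  rfl

lemma Z_zero : Z C 0 = (C.M : ℝ) := by
  have : Z C 0 = ∑ _c ∈ C.cols, (1:ℝ) :=
    Finset.sum_congr rfl fun c hc => Real.rpow_zero _
  rw [this, Finset.sum_const, nsmul_eq_mul, mul_one]
  rfl

lemma sum_colCount : ∑ c ∈ C.cols, C.colCount c = C.N :=
  (Finset.card_eq_sum_card_fiberwise (fun p hp => Finset.mem_image_of_mem _ hp)).symm

lemma N_pos : (0:ℝ) < (C.N : ℝ) := by
  have : 0 < C.N := Finset.card_pos.mpr C.A_nonempty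
  exact_mod_cast this

lemma Z_one : Z C 1 = (C.N : ℝ) := by
  have : Z C 1 = ∑ c ∈ C.cols, (C.colCount c : ℝ) :=
    Finset.sum_congr rfl fun c hc => Real.rpow_one _
  rw [this, ← Nat.cast_sum, sum_colCount]

lemma hasDerivAt_Z (x : ℝ) : HasDerivAt (Z C) (Znum C x) x := by
  have hZ : Z C = fun y => ∑ c ∈ C.cols, Real.exp (y * Lg C c) := funext (Zeq C)
  rw [hZ, Znum_eq]
  apply HasDerivAt.fun_sum
  intro c _
  simpa using (hasDerivAt_mul_const (Lg C c)).exp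

lemma hasDerivAt_logZ (x : ℝ) :
    HasDerivAt (fun y => Real.log (Z C y)) (mex C x) x :=
  (hasDerivAt_Z C x).log (ne_of_gt (Z_pos C x))

lemma continuous_Z : Continuous (Z C) := by
  rw [funext (Zeq C)]
  exact continuous_finset_sum _ fun c _ => ((continuous_id.mul continuous_const).rexp)

lemma continuous_Znum : Continuous (Znum C) := by
  rw [funext (Znum_eq C)]
  exact continuous_finset_sum _ fun c _ =>
    ((continuous_id.mul continuous_const).rexp.mul continuous_const)

lemma continuous_mex : Continuous (mex C) :=
  (continuous_Znum C).div (continuous_Z C) fun x => ne_of_gt (Z_pos C x)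

lemma jensen (x y : ℝ) :
    (y - x) * mex C x + Real.log (Z C x) ≤ Real.log (Z C y) := by
  have hZx := Z_pos C x
  have hZy := Z_pos C y
  have key : ∑ c ∈ C.cols, ((C.colCount c : ℝ) ^ x / Z C x) •
        Real.log ((C.colCount c : ℝ) ^ (y - x))
      ≤ Real.log (∑ c ∈ C.cols, ((C.colCount c : ℝ) ^ x / Z C x) •
        ((C.colCount c : ℝ) ^ (y - x))) := by
    apply (strictConcaveOn_log_Ioi.concaveOn).le_map_sum
    · intro c hc
      positivity
    · rw [← Finset.sum_div, div_eq_one_iff_eq (ne_of_gt hZx)]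
      rfl
    · intro c hc
      exact Set.mem_Ioi.mpr (Real.rpow_pos_of_pos (ncol_pos C hc) _)
  have hL : ∑ c ∈ C.cols, ((C.colCount c : ℝ) ^ x / Z C x) •
        Real.log ((C.colCount c : ℝ) ^ (y - x))
      = (y - x) * mex C x := by
    have hterm : ∀ c ∈ C.cols, ((C.colCount c : ℝ) ^ x / Z C x) •
        Real.log ((C.colCount c : ℝ) ^ (y - x))
        = (y - x) * ((C.colCount c : ℝ) ^ x * Lg C c / Z C x) := by
      intro c hc
      rw [smul_eq_mul, Real.log_rpow (ncol_pos C hc)]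
      show (C.colCount c : ℝ) ^ x / Z C x * ((y - x) * Real.log (C.colCount c))
          = (y - x) * ((C.colCount c : ℝ) ^ x * Real.log (C.colCount c) / Z C x)
      ring
    rw [Finset.sum_congr rfl hterm, ← Finset.mul_sum, ← Finset.sum_div, mex, Znum]
  have hR : ∑ c ∈ C.cols, ((C.colCount c : ℝ) ^ x / Z C x) •
        ((C.colCount c : ℝ) ^ (y - x)) = Z C y / Z C x := by
    have hterm : ∀ c ∈ C.cols, ((C.colCount c : ℝ) ^ x / Z C x) •
        ((C.colCount c : ℝ) ^ (y - x)) = ((C.colCount c : ℝ) ^ y) / Z C x := by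
      intro c hc
      rw [smul_eq_mul, div_mul_eq_mul_div, ← Real.rpow_add (ncol_pos C hc),
        show x + (y - x) = y by ring]
    rw [Finset.sum_congr rfl hterm, ← Finset.sum_div]
    rfl
  rw [hL, hR, Real.log_div (ne_of_gt hZy) (ne_of_gt hZx)] at key
  linarith

lemma rate_eq_iSup (t : ℝ) :
    C.rate t = ⨆ l : ℝ, (l * t - Real.log (Z C l) + Real.log (C.M : ℝ)) := by
  rw [BMData.rate]
  congr 1
  funext l
  have h1 : (1 / (C.M:ℝ)) * ∑ j ∈ C.cols, (C.colCount j : ℝ) ^ l = (1 / (C.M:ℝ)) * Z C l := rfl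
  rw [h1, Real.log_mul (one_div_ne_zero (ne_of_gt (M_pos C))) (ne_of_gt (Z_pos C l)), one_div,
    Real.log_inv]
  ring

lemma rate_at_mex (x : ℝ) :
    C.rate (mex C x) = x * mex C x - Real.log (Z C x) + Real.log (C.M : ℝ) := by
  rw [rate_eq_iSup]
  apply le_antisymm
  · refine ciSup_le fun l => ?_
    have := jensen C x l
    linarith
  · have hbdd : BddAbove (Set.range fun l : ℝ =>
        l * mex C x - Real.log (Z C l) + Real.log (C.M : ℝ)) := by
      refine ⟨x * mex C x - Real.log (Z C x) + Real.log (C.M : ℝ), ?_⟩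
      rintro v ⟨l, rfl⟩
      have := jensen C x l
      simp only
      linarith
    exact le_ciSup hbdd x

lemma rate_ge (x l : ℝ) :
    l * mex C x - Real.log (Z C l) + Real.log (C.M : ℝ) ≤ C.rate (mex C x) := by
  rw [rate_at_mex]
  have := jensen C x l
  linarith

lemma mex_zero : mex C 0 = C.tLow := by
  have h1 : Znum C 0 = ∑ j ∈ C.cols, Real.log (C.colCount j) := by
    refine Finset.sum_congr rfl fun c hc => ?_
    rw [Real.rpow_zero, one_mul]
    rfl
  rw [mex, h1, Z_zero, BMData.tLow, one_div, inv_mul_eq_div]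

lemma mex_one : mex C 1 = C.tUp := by
  have h1 : Znum C 1 = ∑ j ∈ C.cols, (C.colCount j : ℝ) * Real.log (C.colCount j) := by
    refine Finset.sum_congr rfl fun c hc => ?_
    rw [Real.rpow_one]
    rfl
  rw [mex, h1, Z_one, BMData.tUp, Finset.sum_div]
  refine Finset.sum_congr rfl fun c hc => ?_
  rw [div_mul_eq_mul_div]

lemma tLow_le_tUp : C.tLow ≤ C.tUp := by
  have hmono : MonovaryOn (fun c => (C.colCount c : ℝ)) (Lg C) ↑C.cols := by
    intro i hi j hj hlt
    by_contra h
    push_neg at h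
    have : Lg C j ≤ Lg C i := Real.log_le_log (ncol_pos C hj) h.le
    exact absurd hlt (not_lt.mpr this)
  have cheb := hmono.sum_mul_sum_le_card_mul_sum
  have hsum : ∑ c ∈ C.cols, (C.colCount c : ℝ) = (C.N : ℝ) := by
    rw [← Nat.cast_sum, sum_colCount]
  rw [hsum] at cheb
  have hM := M_pos C
  have hN := N_pos C
  have hcard : ((C.cols.card : ℕ) : ℝ) = (C.M : ℝ) := rfl
  rw [hcard] at cheb
  have htU : C.tUp = (∑ c ∈ C.cols, (C.colCount c : ℝ) * Lg C c) / (C.N : ℝ) := by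
    rw [BMData.tUp, Finset.sum_div]
    refine Finset.sum_congr rfl fun c hc => ?_
    rw [div_mul_eq_mul_div]
    rfl
  have htL : C.tLow = (∑ c ∈ C.cols, Lg C c) / (C.M : ℝ) := by
    rw [BMData.tLow, one_div, inv_mul_eq_div]
    rfl
  rw [htU, htL, div_le_div_iff₀ hM hN]
  nlinarith

lemma exists_small_mex (c₀ : Fin C.m) (hc₀ : c₀ ∈ C.cols)
    (hmin : ∀ c ∈ C.cols, Lg C c₀ ≤ Lg C c) {y : ℝ} (hy : Lg C c₀ < y) :
    ∃ x : ℝ, x ≤ 0 ∧ mex C x < y := by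
  set ℓ := Lg C c₀ with hℓ
  have hbound : ∀ x : ℝ, mex C x ≤ ℓ +
      ∑ c ∈ C.cols, ((C.colCount c : ℝ) / (C.colCount c₀ : ℝ)) ^ x * (Lg C c - ℓ) := by
    intro x
    have hZ := Z_pos C x
    have hν₀ : (0:ℝ) < (C.colCount c₀ : ℝ) ^ x := Real.rpow_pos_of_pos (ncol_pos C hc₀) x
    have hnum : Znum C x - ℓ * Z C x = ∑ c ∈ C.cols, (C.colCount c : ℝ) ^ x * (Lg C c - ℓ) := by
      rw [Znum, Z, Finset.mul_sum, ← Finset.sum_sub_distrib]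
      exact Finset.sum_congr rfl fun c hc => by ring
    have hnn : 0 ≤ ∑ c ∈ C.cols, (C.colCount c : ℝ) ^ x * (Lg C c - ℓ) :=
      Finset.sum_nonneg fun c hc => mul_nonneg (Real.rpow_pos_of_pos (ncol_pos C hc) x).le
        (sub_nonneg.mpr (hmin c hc))
    have h1 : mex C x - ℓ = (Znum C x - ℓ * Z C x) / Z C x := by
      rw [mex]
      field_simp
    have hle : (C.colCount c₀ : ℝ) ^ x ≤ Z C x :=
      Finset.single_le_sum (f := fun c => (C.colCount c : ℝ) ^ x)
        (fun c hc => (Real.rpow_pos_of_pos (ncol_pos C hc) x).le) hc₀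
    have h2 : (Znum C x - ℓ * Z C x) / Z C x
        ≤ (Znum C x - ℓ * Z C x) / (C.colCount c₀ : ℝ) ^ x := by
      apply div_le_div_of_nonneg_left _ hν₀ hle
      rw [hnum]
      exact hnn
    have h3 : (Znum C x - ℓ * Z C x) / (C.colCount c₀ : ℝ) ^ x
        = ∑ c ∈ C.cols, ((C.colCount c : ℝ) / (C.colCount c₀ : ℝ)) ^ x * (Lg C c - ℓ) := by
      rw [hnum, Finset.sum_div]
      refine Finset.sum_congr rfl fun c hc => ?_
      rw [Real.div_rpow (ncol_pos C hc).le (ncol_pos C hc₀).le]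
      ring
    rw [h3] at h2
    linarith [h1, h2]
  have htend : Filter.Tendsto
      (fun x : ℝ => ∑ c ∈ C.cols, ((C.colCount c : ℝ) / (C.colCount c₀ : ℝ)) ^ x * (Lg C c - ℓ))
      Filter.atBot (nhds 0) := by
    have h0 : (0:ℝ) = ∑ _c ∈ C.cols, (0:ℝ) := by simp
    rw [h0]
    apply tendsto_finset_sum
    intro c hc
    rcases eq_or_lt_of_le (hmin c hc) with heq | hlt
    · have hz : Lg C c - ℓ = 0 := by rw [← heq]; ring
      simpa [hz] using (tendsto_const_nhds :
        Filter.Tendsto (fun _ : ℝ => (0:ℝ)) Filter.atBot (nhds 0))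
    · have hrpos : (0:ℝ) < (C.colCount c : ℝ) / (C.colCount c₀ : ℝ) :=
        div_pos (ncol_pos C hc) (ncol_pos C hc₀)
    -- ratio > 1 since logs strictly increase
      have hr : 1 < (C.colCount c : ℝ) / (C.colCount c₀ : ℝ) := by
        rw [lt_div_iff₀ (ncol_pos C hc₀), one_mul]
        have : Real.log (C.colCount c₀ : ℝ) < Real.log (C.colCount c : ℝ) := hlt
        exact (Real.log_lt_log_iff (ncol_pos C hc₀) (ncol_pos C hc)).mp this
      have htends : Filter.Tendsto
          (fun x : ℝ => ((C.colCount c : ℝ) / (C.colCount c₀ : ℝ)) ^ x)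
          Filter.atBot (nhds 0) := by
        have heq2 : (fun x : ℝ => ((C.colCount c : ℝ) / (C.colCount c₀ : ℝ)) ^ x)
            = fun x => Real.exp (Real.log ((C.colCount c : ℝ) / (C.colCount c₀ : ℝ)) * x) :=
          funext fun x => Real.rpow_def_of_pos hrpos x
        rw [heq2]
        apply Real.tendsto_exp_atBot.comp
        exact Filter.Tendsto.const_mul_atBot (Real.log_pos hr) Filter.tendsto_id
      simpa using htends.mul_const (Lg C c - ℓ)
  have hev := htend.eventually_lt_const (show (0:ℝ) < y - ℓ by linarith)
  obtain ⟨x, hx1, hx2⟩ := ((Filter.eventually_le_atBot (0:ℝ)).and hev).exists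
  exact ⟨x, hx1, by linarith [hbound x]⟩

lemma slope_right (x β : ℝ) (h : mex C x < β) :
    ∃ θ : ℝ, 0 < θ ∧ Real.log (Z C (x + θ)) - Real.log (Z C x) < θ * β := by
  have hs := hasDerivAt_iff_tendsto_slope.mp (hasDerivAt_logZ C x)
  have hs' : Filter.Tendsto (slope (fun y => Real.log (Z C y)) x) (nhdsWithin x (Set.Ioi x))
      (nhds (mex C x)) :=
    hs.mono_left (nhdsWithin_mono x fun y hy => Set.mem_compl_singleton_iff.mpr (ne_of_gt (Set.mem_Ioi.mp hy)))
  obtain ⟨y, hy1, hy2⟩ := ((hs'.eventually_lt_const h).and self_mem_nhdsWithin).exists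
  have hxy : x < y := Set.mem_Ioi.mp hy2
  refine ⟨y - x, sub_pos.mpr hxy, ?_⟩
  rw [slope_def_field] at hy1
  rw [show x + (y - x) = y by ring]
  have := (div_lt_iff₀ (sub_pos.mpr hxy)).mp hy1
  linarith

lemma slope_left (x α : ℝ) (h : α < mex C x) :
    ∃ θ : ℝ, 0 < θ ∧ Real.log (Z C (x - θ)) - Real.log (Z C x) < -(θ * α) := by
  have hs := hasDerivAt_iff_tendsto_slope.mp (hasDerivAt_logZ C x)
  have hs' : Filter.Tendsto (slope (fun y => Real.log (Z C y)) x) (nhdsWithin x (Set.Iio x))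
      (nhds (mex C x)) :=
    hs.mono_left (nhdsWithin_mono x fun y hy => Set.mem_compl_singleton_iff.mpr (ne_of_lt (Set.mem_Iio.mp hy)))
  obtain ⟨y, hy1, hy2⟩ := ((hs'.eventually_const_lt h).and self_mem_nhdsWithin).exists
  have hxy : y < x := Set.mem_Iio.mp hy2
  refine ⟨x - y, sub_pos.mpr hxy, ?_⟩
  rw [slope_def_field] at hy1
  rw [show x - (x - y) = y by ring]
  have hneg : y - x < 0 := by linarith
  have := (lt_div_iff_of_neg hneg).mp hy1
  linarith

lemma natCard_subtype {σ : Type*} [Fintype σ] (P : σ → Prop) [DecidablePred P] :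
    ((Nat.card {x // P x} : ℕ) : ℝ) = ∑ x : σ, if P x then (1:ℝ) else 0 := by
  rw [Nat.card_eq_fintype_card, Fintype.card_subtype, Finset.card_filter]
  push_cast
  exact Finset.sum_congr rfl fun x _ => by split <;> simp

section Words

variable (φ : {a // a ∈ C.A} → Fin C.m)

lemma phi_mem (hφ : ∀ j : Fin C.m, Nat.card {a : {a // a ∈ C.A} // φ a = j} = C.colCount j)
    (a : {a // a ∈ C.A}) : φ a ∈ C.cols := by
  have h1 : 0 < Nat.card {a' : {a // a ∈ C.A} // φ a' = φ a} :=
    @Nat.card_pos {a' : {a // a ∈ C.A} // φ a' = φ a} ⟨⟨a, rfl⟩⟩ _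
  rw [hφ (φ a)] at h1
  exact (colCount_pos_iff C (φ a)).mp h1

lemma sum_letters (hφ : ∀ j : Fin C.m, Nat.card {a : {a // a ∈ C.A} // φ a = j} = C.colCount j)
    (h : Fin C.m → ℝ) :
    ∑ a : {a // a ∈ C.A}, h (φ a) = ∑ c ∈ C.cols, (C.colCount c : ℝ) * h c := by
  classical
  have hfib : ∀ c : Fin C.m,
      (∑ a : {a // a ∈ C.A}, if φ a = c then (1:ℝ) else 0) = (C.colCount c : ℝ) := by
    intro c
    rw [← natCard_subtype (fun a : {a // a ∈ C.A} => φ a = c), hφ c]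
  have h1 : ∀ a : {a // a ∈ C.A},
      h (φ a) = ∑ c ∈ C.cols, (if φ a = c then (1:ℝ) else 0) * h c := by
    intro a
    rw [Finset.sum_eq_single (φ a)]
    · simp
    · intro b _ hne
      rw [if_neg (fun hh => hne (Eq.symm hh)), zero_mul]
    · intro hnot
      exact absurd (phi_mem C φ hφ a) hnot
  calc ∑ a : {a // a ∈ C.A}, h (φ a)
      = ∑ a : {a // a ∈ C.A}, ∑ c ∈ C.cols, (if φ a = c then (1:ℝ) else 0) * h c :=
        Finset.sum_congr rfl fun a _ => h1 a
    _ = ∑ c ∈ C.cols, ∑ a : {a // a ∈ C.A}, (if φ a = c then (1:ℝ) else 0) * h c :=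
        Finset.sum_comm
    _ = ∑ c ∈ C.cols, (C.colCount c : ℝ) * h c := by
        refine Finset.sum_congr rfl fun c _ => ?_
        rw [← Finset.sum_mul, hfib c]

lemma letter_Z (hφ : ∀ j : Fin C.m, Nat.card {a : {a // a ∈ C.A} // φ a = j} = C.colCount j)
    (μ : ℝ) :
    ∑ a : {a // a ∈ C.A}, (C.colCount (φ a) : ℝ) ^ μ = Z C (μ + 1) := by
  rw [sum_letters C φ hφ (fun c => (C.colCount c : ℝ) ^ μ), Z]
  refine Finset.sum_congr rfl fun c hc => ?_
  rw [Real.rpow_add_one (ne_of_gt (ncol_pos C hc))]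
  ring

/-- The total log-count of a word. -/
def Sw {J : ℕ} (w : Fin J → {a // a ∈ C.A}) : ℝ := ∑ j, Lg C (φ (w j))

lemma Lg_phi_nonneg (hφ : ∀ j : Fin C.m, Nat.card {a : {a // a ∈ C.A} // φ a = j} = C.colCount j)
    (a : {a // a ∈ C.A}) : 0 ≤ Lg C (φ a) := Lg_nonneg C (phi_mem C φ hφ a)

lemma sum_exp_words (hφ : ∀ j : Fin C.m, Nat.card {a : {a // a ∈ C.A} // φ a = j} = C.colCount j)
    (J : ℕ) (μ : ℝ) :
    ∑ w : Fin J → {a // a ∈ C.A}, Real.exp (μ * Sw C φ w) = Z C (μ + 1) ^ J := by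
  classical
  have h1 : ∀ w : Fin J → {a // a ∈ C.A},
      Real.exp (μ * Sw C φ w) = ∏ j : Fin J, (C.colCount (φ (w j)) : ℝ) ^ μ := by
    intro w
    rw [Sw, Finset.mul_sum, Real.exp_sum]
    refine Finset.prod_congr rfl fun j _ => ?_
    rw [Real.rpow_def_of_pos (ncol_pos C (phi_mem C φ hφ (w j))), mul_comm]
    rfl
  calc ∑ w : Fin J → {a // a ∈ C.A}, Real.exp (μ * Sw C φ w)
      = ∑ w : Fin J → {a // a ∈ C.A}, ∏ j : Fin J, (C.colCount (φ (w j)) : ℝ) ^ μ :=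
        Finset.sum_congr rfl fun w _ => h1 w
    _ = ∏ _j : Fin J, ∑ a : {a // a ∈ C.A}, (C.colCount (φ a) : ℝ) ^ μ := by
        rw [Finset.prod_univ_sum]
        rw [Fintype.piFinset_univ]
    _ = Z C (μ + 1) ^ J := by
        rw [letter_Z C φ hφ, Finset.prod_const, Finset.card_univ, Fintype.card_fin]

lemma core_le (hφ : ∀ j : Fin C.m, Nat.card {a : {a // a ∈ C.A} // φ a = j} = C.colCount j)
    (J : ℕ) (μ η b : ℝ) (hη : 0 ≤ η) :
    ∑ w : Fin J → {a // a ∈ C.A}, (if Sw C φ w ≤ b then Real.exp (μ * Sw C φ w) else 0)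
      ≤ Real.exp (η * b) * Z C (μ - η + 1) ^ J := by
  classical
  calc ∑ w : Fin J → {a // a ∈ C.A}, (if Sw C φ w ≤ b then Real.exp (μ * Sw C φ w) else 0)
      ≤ ∑ w : Fin J → {a // a ∈ C.A}, Real.exp (η * b) * Real.exp ((μ - η) * Sw C φ w) := by
        refine Finset.sum_le_sum fun w _ => ?_
        by_cases h : Sw C φ w ≤ b
        · rw [if_pos h, ← Real.exp_add]
          apply Real.exp_le_exp.mpr
          nlinarith [mul_le_mul_of_nonneg_left h hη]
        · rw [if_neg h]
          positivity
    _ = Real.exp (η * b) * Z C (μ - η + 1) ^ J := by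
        rw [← Finset.mul_sum, sum_exp_words C φ hφ]

lemma core_ge (hφ : ∀ j : Fin C.m, Nat.card {a : {a // a ∈ C.A} // φ a = j} = C.colCount j)
    (J : ℕ) (μ η b : ℝ) (hη : 0 ≤ η) :
    ∑ w : Fin J → {a // a ∈ C.A}, (if b ≤ Sw C φ w then Real.exp (μ * Sw C φ w) else 0)
      ≤ Real.exp (-(η * b)) * Z C (μ + η + 1) ^ J := by
  classical
  calc ∑ w : Fin J → {a // a ∈ C.A}, (if b ≤ Sw C φ w then Real.exp (μ * Sw C φ w) else 0)
      ≤ ∑ w : Fin J → {a // a ∈ C.A}, Real.exp (-(η * b)) * Real.exp ((μ + η) * Sw C φ w) := by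
        refine Finset.sum_le_sum fun w _ => ?_
        by_cases h : b ≤ Sw C φ w
        · rw [if_pos h, ← Real.exp_add]
          apply Real.exp_le_exp.mpr
          nlinarith [mul_le_mul_of_nonneg_left h hη]
        · rw [if_neg h]
          positivity
    _ = Real.exp (-(η * b)) * Z C (μ + η + 1) ^ J := by
        rw [← Finset.mul_sum, sum_exp_words C φ hφ]

lemma count_mid (hφ : ∀ j : Fin C.m, Nat.card {a : {a // a ∈ C.A} // φ a = j} = C.colCount j)
    (J : ℕ) (lam θ θ' a b : ℝ) (hlam : lam ≤ 1) (hθ : 0 ≤ θ) (hθ' : 0 ≤ θ') (hab : a ≤ b) :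
    Real.exp ((1 - lam) * a) * (Z C lam ^ J
        - Real.exp (θ' * a) * Z C (lam - θ') ^ J
        - Real.exp (-(θ * b)) * Z C (lam + θ) ^ J)
      ≤ ∑ w : Fin J → {a // a ∈ C.A}, (if Sw C φ w ≤ b then (1:ℝ) else 0) := by
  classical
  have key : ∀ w : Fin J → {a // a ∈ C.A},
      Real.exp ((1 - lam) * a) * (Real.exp ((lam - 1) * Sw C φ w)
        - (if Sw C φ w ≤ a then Real.exp ((lam - 1) * Sw C φ w) else 0)
        - (if b ≤ Sw C φ w then Real.exp ((lam - 1) * Sw C φ w) else 0))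
      ≤ (if Sw C φ w ≤ b then (1:ℝ) else 0) := by
    intro w
    set S := Sw C φ w with hS
    by_cases h1 : S ≤ a
    · rw [if_pos h1, if_pos (le_trans h1 hab)]
      have hin : Real.exp ((lam - 1) * S) - Real.exp ((lam - 1) * S)
          - (if b ≤ S then Real.exp ((lam - 1) * S) else 0) ≤ 0 := by
        split
        · nlinarith [Real.exp_pos ((lam - 1) * S)]
        · simp
      nlinarith [Real.exp_pos ((1 - lam) * a)]
    · push_neg at h1
      rw [if_neg (not_le.mpr h1)]
      by_cases h2 : b ≤ S
      · rw [if_pos h2]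
        have : Real.exp ((lam - 1) * S) - 0 - Real.exp ((lam - 1) * S) = 0 := by ring
        rw [this, mul_zero]
        split <;> norm_num
      · push_neg at h2
        rw [if_neg (not_le.mpr h2), if_pos h2.le, sub_zero, sub_zero, ← Real.exp_add]
        calc Real.exp ((1 - lam) * a + (lam - 1) * S)
            ≤ Real.exp 0 := Real.exp_le_exp.mpr (by nlinarith)
          _ = 1 := Real.exp_zero
  have hsum := Finset.sum_le_sum fun w (_ : w ∈ Finset.univ) => key w
  have hexpand : ∑ w : Fin J → {a // a ∈ C.A},
      Real.exp ((1 - lam) * a) * (Real.exp ((lam - 1) * Sw C φ w)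
        - (if Sw C φ w ≤ a then Real.exp ((lam - 1) * Sw C φ w) else 0)
        - (if b ≤ Sw C φ w then Real.exp ((lam - 1) * Sw C φ w) else 0))
      = Real.exp ((1 - lam) * a) * ((∑ w : Fin J → {a // a ∈ C.A}, Real.exp ((lam - 1) * Sw C φ w))
        - (∑ w : Fin J → {a // a ∈ C.A}, if Sw C φ w ≤ a then Real.exp ((lam - 1) * Sw C φ w) else 0)
        - (∑ w : Fin J → {a // a ∈ C.A}, if b ≤ Sw C φ w then Real.exp ((lam - 1) * Sw C φ w) else 0)) := by
    rw [← Finset.sum_sub_distrib, ← Finset.sum_sub_distrib, Finset.mul_sum]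
  have hZ1 : ∑ w : Fin J → {a // a ∈ C.A}, Real.exp ((lam - 1) * Sw C φ w) = Z C lam ^ J := by
    rw [sum_exp_words C φ hφ J (lam - 1), show lam - 1 + 1 = lam by ring]
  have hB1 : (∑ w : Fin J → {a // a ∈ C.A},
      if Sw C φ w ≤ a then Real.exp ((lam - 1) * Sw C φ w) else 0)
      ≤ Real.exp (θ' * a) * Z C (lam - θ') ^ J := by
    have := core_le C φ hφ J (lam - 1) θ' a hθ'
    rwa [show lam - 1 - θ' + 1 = lam - θ' by ring] at this
  have hB2 : (∑ w : Fin J → {a // a ∈ C.A},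
      if b ≤ Sw C φ w then Real.exp ((lam - 1) * Sw C φ w) else 0)
      ≤ Real.exp (-(θ * b)) * Z C (lam + θ) ^ J := by
    have := core_ge C φ hφ J (lam - 1) θ b hθ
    rwa [show lam - 1 + θ + 1 = lam + θ by ring] at this
  calc Real.exp ((1 - lam) * a) * (Z C lam ^ J
        - Real.exp (θ' * a) * Z C (lam - θ') ^ J
        - Real.exp (-(θ * b)) * Z C (lam + θ) ^ J)
      ≤ Real.exp ((1 - lam) * a) * ((∑ w : Fin J → {a // a ∈ C.A}, Real.exp ((lam - 1) * Sw C φ w))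
        - (∑ w : Fin J → {a // a ∈ C.A}, if Sw C φ w ≤ a then Real.exp ((lam - 1) * Sw C φ w) else 0)
        - (∑ w : Fin J → {a // a ∈ C.A}, if b ≤ Sw C φ w then Real.exp ((lam - 1) * Sw C φ w) else 0)) := by
        apply mul_le_mul_of_nonneg_left _ (Real.exp_pos _).le
        rw [hZ1]
        have := sub_le_sub (sub_le_sub_left hB1 (Z C lam ^ J)) hB2
        linarith [this]
    _ = ∑ w : Fin J → {a // a ∈ C.A},
        Real.exp ((1 - lam) * a) * (Real.exp ((lam - 1) * Sw C φ w)
          - (if Sw C φ w ≤ a then Real.exp ((lam - 1) * Sw C φ w) else 0)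
          - (if b ≤ Sw C φ w then Real.exp ((lam - 1) * Sw C φ w) else 0)) := hexpand.symm
    _ ≤ _ := hsum

end Words

end S14

set_option maxHeartbeats 1600000 in
/-- **Lemma (counting words with small column average).** Let `φ` assign to each map its
column (any map with fibres of cardinality `N_ĵ`), and for a word `ī` of length `J` over
the maps let `A(ī) = (1/J) ∑ log N_{φ(i_j)}`. Then (a) for `t ∈ [t̲, max_ĵ log N_ĵ)` the
exponential growth rate of `#{ī : A(ī) ≤ t}` is `min{t,t̄} + log M − I(min{t,t̄})`; and
(b) for `t ∈ (min_ĵ log N_ĵ, t̲)` the upper growth rate is at most `t + log M < t̲ + log M`. -/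
theorem statement14 (C : BMData) (hnu : C.NonUniform)
    (φ : {a // a ∈ C.A} → Fin C.m)
    (hφ : ∀ j : Fin C.m, Nat.card {a : {a // a ∈ C.A} // φ a = j} = C.colCount j) :
    (∀ t : ℝ, C.tLow ≤ t →
      t < (⨆ j : {c // c ∈ C.cols}, Real.log (C.colCount j.1)) →
      Filter.Tendsto (fun J : ℕ => (1 / (J : ℝ)) * Real.log
          (Nat.card {w : Fin J → {a // a ∈ C.A} //
            (1 / (J : ℝ)) * ∑ j : Fin J, Real.log (C.colCount (φ (w j))) ≤ t}))
        Filter.atTop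
        (nhds (min t C.tUp + Real.log C.M - C.rate (min t C.tUp)))) ∧
    (∀ t : ℝ, (⨅ j : {c // c ∈ C.cols}, Real.log (C.colCount j.1)) < t → t < C.tLow →
      Filter.limsup (fun J : ℕ => (1 / (J : ℝ)) * Real.log
          (Nat.card {w : Fin J → {a // a ∈ C.A} //
            (1 / (J : ℝ)) * ∑ j : Fin J, Real.log (C.colCount (φ (w j))) ≤ t}))
        Filter.atTop ≤ t + Real.log C.M ∧
      t + Real.log C.M < C.tLow + Real.log C.M) := by
  classical
  obtain ⟨c₀, hc₀, hc₀min⟩ := C.cols.exists_min_image (S14.Lg C) (S14.cols_nonempty C)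
  have hMpos := S14.M_pos C
  -- the minimal log-count is strictly below `tLow` by non-uniformity
  have htLow_eq : C.tLow = (∑ c ∈ C.cols, S14.Lg C c) / (C.M : ℝ) := by
    rw [BMData.tLow, one_div, inv_mul_eq_div]
    rfl
  have hlt_tLow : S14.Lg C c₀ < C.tLow := by
    obtain ⟨i, hi, j, hj, hne⟩ := hnu
    have hLne : S14.Lg C i ≠ S14.Lg C j := by
      intro h
      apply hne
      have hi1 : 0 < C.colCount i := (S14.colCount_pos_iff C i).mpr hi
      have hj1 : 0 < C.colCount j := (S14.colCount_pos_iff C j).mpr hj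
      have h1 : Real.exp (Real.log (C.colCount i : ℝ)) = Real.exp (Real.log (C.colCount j : ℝ)) :=
        congrArg Real.exp h
      rw [Real.exp_log (by exact_mod_cast hi1), Real.exp_log (by exact_mod_cast hj1)] at h1
      exact_mod_cast h1
    have hex : ∃ c ∈ C.cols, S14.Lg C c₀ < S14.Lg C c := by
      rcases lt_or_gt_of_ne hLne with h | h
      · exact ⟨j, hj, lt_of_le_of_lt (hc₀min i hi) h⟩
      · exact ⟨i, hi, lt_of_le_of_lt (hc₀min j hj) h⟩
    obtain ⟨c₁, hc₁, hc₁lt⟩ := hex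
    have hconst : ∑ _c ∈ C.cols, S14.Lg C c₀ = (C.M : ℝ) * S14.Lg C c₀ := by
      rw [Finset.sum_const, nsmul_eq_mul]
      rfl
    have hsum : (C.M : ℝ) * S14.Lg C c₀ < ∑ c ∈ C.cols, S14.Lg C c := by
      rw [← hconst]
      exact Finset.sum_lt_sum (fun c hc => hc₀min c hc) ⟨c₁, hc₁, hc₁lt⟩
    rw [htLow_eq, lt_div_iff₀ hMpos]
    nlinarith
  -- a letter in the minimal column
  obtain ⟨⟨a₀, ha₀⟩⟩ : Nonempty {a' : {a // a ∈ C.A} // φ a' = c₀} := by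
    have hpos : 0 < Nat.card {a' : {a // a ∈ C.A} // φ a' = c₀} := by
      rw [hφ]
      exact (S14.colCount_pos_iff C c₀).mpr hc₀
    exact (Nat.card_pos_iff.mp hpos).1
  -- the count is at least 1
  have hcount_one : ∀ t : ℝ, S14.Lg C c₀ ≤ t → ∀ J : ℕ,
      (1:ℝ) ≤ ∑ w : Fin J → {a // a ∈ C.A}, (if S14.Sw C φ w ≤ (J:ℝ) * t then (1:ℝ) else 0) := by
    intro t ht J
    have hw₀ : S14.Sw C φ (fun _ : Fin J => a₀) ≤ (J:ℝ) * t := by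
      rw [S14.Sw]
      have : ∑ _j : Fin J, S14.Lg C (φ a₀) = (J:ℝ) * S14.Lg C c₀ := by
        rw [ha₀, Finset.sum_const, Finset.card_univ, Fintype.card_fin, nsmul_eq_mul]
      rw [this]
      exact mul_le_mul_of_nonneg_left ht (Nat.cast_nonneg J)
    calc (1:ℝ) = if S14.Sw C φ (fun _ : Fin J => a₀) ≤ (J:ℝ) * t then (1:ℝ) else 0 := by rw [if_pos hw₀]
      _ ≤ _ := Finset.single_le_sum
          (f := fun w : Fin J → {a // a ∈ C.A} => if S14.Sw C φ w ≤ (J:ℝ) * t then (1:ℝ) else 0)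
          (fun w _ => by split <;> norm_num) (Finset.mem_univ _)
  -- cardinal identity
  have hcard : ∀ (t : ℝ) (J : ℕ), 1 ≤ J →
      ((Nat.card {w : Fin J → {a // a ∈ C.A} //
          (1 / (J : ℝ)) * ∑ j : Fin J, Real.log (C.colCount (φ (w j))) ≤ t} : ℕ) : ℝ)
        = ∑ w : Fin J → {a // a ∈ C.A}, (if S14.Sw C φ w ≤ (J:ℝ) * t then (1:ℝ) else 0) := by
    intro t J hJ
    have hJpos : (0:ℝ) < J := by exact_mod_cast hJ
    rw [S14.natCard_subtype]
    refine Finset.sum_congr rfl fun w _ => ?_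
    have hiff : ((1 / (J : ℝ)) * ∑ j : Fin J, Real.log (C.colCount (φ (w j))) ≤ t)
        ↔ (S14.Sw C φ w ≤ (J:ℝ) * t) := by
      rw [one_div, inv_mul_le_iff₀ hJpos]
      exact Iff.rfl
    rw [if_congr hiff rfl rfl]
  -- uniform per-J upper bound
  have hupper : ∀ t lam : ℝ, S14.Lg C c₀ ≤ t → lam ≤ 1 → ∀ J : ℕ, 1 ≤ J →
      (1 / (J : ℝ)) * Real.log
          (Nat.card {w : Fin J → {a // a ∈ C.A} //
            (1 / (J : ℝ)) * ∑ j : Fin J, Real.log (C.colCount (φ (w j))) ≤ t})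
        ≤ (1 - lam) * t + Real.log (S14.Z C lam) := by
    intro t lam ht hlam J hJ
    have hJpos : (0:ℝ) < J := by exact_mod_cast hJ
    have hcnt1 := hcount_one t ht J
    have hbound := S14.core_le C φ hφ J 0 (1 - lam) ((J:ℝ) * t) (by linarith)
    simp only [zero_mul, Real.exp_zero] at hbound
    rw [show (0:ℝ) - (1 - lam) + 1 = lam by ring] at hbound
    have hZ := S14.Z_pos C lam
    have hcnt_pos : (0:ℝ) < ∑ w : Fin J → {a // a ∈ C.A},
        (if S14.Sw C φ w ≤ (J:ℝ) * t then (1:ℝ) else 0) := lt_of_lt_of_le one_pos hcnt1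
    have hlog := Real.log_le_log hcnt_pos hbound
    rw [Real.log_mul (Real.exp_ne_zero _) (ne_of_gt (pow_pos hZ J)), Real.log_exp,
      Real.log_pow] at hlog
    rw [hcard t J hJ]
    calc (1 / (J:ℝ)) * Real.log (∑ w : Fin J → {a // a ∈ C.A},
          (if S14.Sw C φ w ≤ (J:ℝ) * t then (1:ℝ) else 0))
        ≤ (1 / (J:ℝ)) * ((1 - lam) * ((J:ℝ) * t) + (J : ℕ) * Real.log (S14.Z C lam)) :=
          mul_le_mul_of_nonneg_left hlog (by positivity)
      _ = (1 - lam) * t + Real.log (S14.Z C lam) := by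
          field_simp
  -- eventual lower bound
  have hlower : ∀ t lam α : ℝ, S14.Lg C c₀ ≤ t → lam ≤ 1 → α < S14.mex C lam →
      S14.mex C lam < t →
      ∀ᶠ J : ℕ in Filter.atTop,
        (1 - lam) * α + Real.log (S14.Z C lam) - Real.log 2 / (J:ℝ)
          ≤ (1 / (J : ℝ)) * Real.log
            (Nat.card {w : Fin J → {a // a ∈ C.A} //
              (1 / (J : ℝ)) * ∑ j : Fin J, Real.log (C.colCount (φ (w j))) ≤ t}) := by
    intro t lam α ht hlam hα hmt
    obtain ⟨θ, hθpos, hθ⟩ := S14.slope_right C lam t hmt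
    obtain ⟨θ', hθ'pos, hθ'⟩ := S14.slope_left C lam α hα
    have hZlpos := S14.Z_pos C lam
    have hD₁pos : 0 < Real.exp (θ' * α) * S14.Z C (lam - θ') :=
      mul_pos (Real.exp_pos _) (S14.Z_pos C _)
    have hD₂pos : 0 < Real.exp (-(θ * t)) * S14.Z C (lam + θ) :=
      mul_pos (Real.exp_pos _) (S14.Z_pos C _)
    have hD₁lt : Real.exp (θ' * α) * S14.Z C (lam - θ') < S14.Z C lam := by
      rw [← Real.exp_log hD₁pos, ← Real.exp_log hZlpos]
      apply Real.exp_lt_exp.mpr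
      rw [Real.log_mul (Real.exp_ne_zero _) (ne_of_gt (S14.Z_pos C _)), Real.log_exp]
      linarith
    have hD₂lt : Real.exp (-(θ * t)) * S14.Z C (lam + θ) < S14.Z C lam := by
      rw [← Real.exp_log hD₂pos, ← Real.exp_log hZlpos]
      apply Real.exp_lt_exp.mpr
      rw [Real.log_mul (Real.exp_ne_zero _) (ne_of_gt (S14.Z_pos C _)), Real.log_exp]
      linarith
    set r₁ := Real.exp (θ' * α) * S14.Z C (lam - θ') / S14.Z C lam with hr₁def
    set r₂ := Real.exp (-(θ * t)) * S14.Z C (lam + θ) / S14.Z C lam with hr₂def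
    have hr₁0 : 0 ≤ r₁ := le_of_lt (div_pos hD₁pos hZlpos)
    have hr₂0 : 0 ≤ r₂ := le_of_lt (div_pos hD₂pos hZlpos)
    have hr₁1 : r₁ < 1 := (div_lt_one hZlpos).mpr hD₁lt
    have hr₂1 : r₂ < 1 := (div_lt_one hZlpos).mpr hD₂lt
    have hF₁ : ∀ᶠ J : ℕ in Filter.atTop, r₁ ^ J < 1/4 :=
      (tendsto_pow_atTop_nhds_zero_of_lt_one hr₁0 hr₁1).eventually_lt_const (by norm_num)
    have hF₂ : ∀ᶠ J : ℕ in Filter.atTop, r₂ ^ J < 1/4 :=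
      (tendsto_pow_atTop_nhds_zero_of_lt_one hr₂0 hr₂1).eventually_lt_const (by norm_num)
    filter_upwards [hF₁, hF₂, Filter.eventually_ge_atTop 1] with J h₁ h₂ hJ
    have hJpos : (0:ℝ) < J := by exact_mod_cast hJ
    have hαt : (J:ℝ) * α ≤ (J:ℝ) * t :=
      mul_le_mul_of_nonneg_left (by linarith) (le_of_lt hJpos)
    have hmid := S14.count_mid C φ hφ J lam θ θ' ((J:ℝ) * α) ((J:ℝ) * t)
      hlam hθpos.le hθ'pos.le hαt
    rw [show (1 - lam) * ((J:ℝ) * α) = (J:ℕ) * ((1 - lam) * α) by push_cast; ring,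
      show θ' * ((J:ℝ) * α) = (J:ℕ) * (θ' * α) by push_cast; ring,
      show -(θ * ((J:ℝ) * t)) = (J:ℕ) * (-(θ * t)) by push_cast; ring,
      Real.exp_nat_mul, Real.exp_nat_mul, Real.exp_nat_mul, ← mul_pow, ← mul_pow] at hmid
    have hcnt1 := hcount_one t ht J
    -- combine with the geometric smallness of the tails
    have he₁ : (Real.exp (θ' * α) * S14.Z C (lam - θ')) ^ J = r₁ ^ J * S14.Z C lam ^ J := by
      rw [hr₁def, div_pow, div_mul_cancel₀]
      exact pow_ne_zero _ (ne_of_gt hZlpos)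
    have he₂ : (Real.exp (-(θ * t)) * S14.Z C (lam + θ)) ^ J = r₂ ^ J * S14.Z C lam ^ J := by
      rw [hr₂def, div_pow, div_mul_cancel₀]
      exact pow_ne_zero _ (ne_of_gt hZlpos)
    have hZpowpos : (0:ℝ) < S14.Z C lam ^ J := pow_pos hZlpos J
    have hEpos : (0:ℝ) < Real.exp ((1 - lam) * α) ^ J := pow_pos (Real.exp_pos _) J
    have hhalf : Real.exp ((1 - lam) * α) ^ J * (S14.Z C lam ^ J * (1/2))
        ≤ Real.exp ((1 - lam) * α) ^ J * (S14.Z C lam ^ J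
          - (Real.exp (θ' * α) * S14.Z C (lam - θ')) ^ J
          - (Real.exp (-(θ * t)) * S14.Z C (lam + θ)) ^ J) := by
      apply mul_le_mul_of_nonneg_left _ hEpos.le
      rw [he₁, he₂]
      nlinarith
    have hKle : Real.exp ((1 - lam) * α) ^ J * (S14.Z C lam ^ J * (1/2))
        ≤ ∑ w : Fin J → {a // a ∈ C.A}, (if S14.Sw C φ w ≤ (J:ℝ) * t then (1:ℝ) else 0) :=
      le_trans hhalf hmid
    have hKpos : (0:ℝ) < Real.exp ((1 - lam) * α) ^ J * (S14.Z C lam ^ J * (1/2)) := by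
      positivity
    have hlog := Real.log_le_log hKpos hKle
    rw [Real.log_mul (ne_of_gt hEpos) (by positivity),
      Real.log_mul (ne_of_gt hZpowpos) (by norm_num),
      Real.log_pow, Real.log_pow, Real.log_exp] at hlog
    rw [hcard t J hJ]
    have hLHS : (1 - lam) * α + Real.log (S14.Z C lam) - Real.log 2 / (J:ℝ)
        = (1 / (J:ℝ)) * ((J:ℕ) * ((1 - lam) * α)
          + ((J:ℕ) * Real.log (S14.Z C lam) + Real.log (1/2))) := by
      rw [one_div (2:ℝ), Real.log_inv]
      field_simp
      ring
    rw [hLHS]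
    exact mul_le_mul_of_nonneg_left hlog (by positivity)
  constructor
  · -- part (a)
    intro t htLow _
    set t' := min t C.tUp with ht'def
    have htlow_t' : C.tLow ≤ t' := le_min htLow (S14.tLow_le_tUp C)
    have ht'_le_t : t' ≤ t := min_le_left _ _
    have ht'_le_tUp : t' ≤ C.tUp := min_le_right _ _
    have hℓt' : S14.Lg C c₀ < t' := lt_of_lt_of_le hlt_tLow htlow_t'
    have hℓt : S14.Lg C c₀ < t := lt_of_lt_of_le hℓt' ht'_le_t
    obtain ⟨lam0, hlam0le, hlam0mex, hlam0t⟩ :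
        ∃ lam0 : ℝ, lam0 ≤ 1 ∧ S14.mex C lam0 = t' ∧ (1 - lam0) * t = (1 - lam0) * t' := by
      by_cases hcase : t < C.tUp
      · have ht'' : t' = t := min_eq_left hcase.le
        have hIcc : t' ∈ Set.Icc (S14.mex C 0) (S14.mex C 1) := by
          rw [S14.mex_zero, S14.mex_one]
          exact ⟨htlow_t', ht'_le_tUp⟩
        obtain ⟨lam0, hmem, heq⟩ := intermediate_value_Icc (by norm_num : (0:ℝ) ≤ 1)
          ((S14.continuous_mex C).continuousOn) hIcc
        exact ⟨lam0, hmem.2, heq, by rw [ht'']⟩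
      · refine ⟨1, le_rfl, ?_, by ring⟩
        rw [S14.mex_one, ht'def, min_eq_right (not_lt.mp hcase)]
    have hrate : C.rate t' = lam0 * t' - Real.log (S14.Z C lam0) + Real.log (C.M:ℝ) := by
      rw [← hlam0mex, S14.rate_at_mex, hlam0mex]
    have hLeq : t' + Real.log (C.M:ℝ) - C.rate t'
        = (1 - lam0) * t' + Real.log (S14.Z C lam0) := by
      rw [hrate]
      ring
    rw [tendsto_order]
    constructor
    · -- lower bound
      intro c hc
      have hgap : 0 < t' + Real.log (C.M:ℝ) - C.rate t' - c := by linarith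
      set gap := t' + Real.log (C.M:ℝ) - C.rate t' - c with hgapdef
      clear_value gap
      set y₀ := (S14.Lg C c₀ + t') / 2 with hy₀def
      clear_value y₀
      have hy₀1 : S14.Lg C c₀ < y₀ := by rw [hy₀def]; linarith
      have hy₀2 : y₀ < t' := by rw [hy₀def]; linarith
      obtain ⟨x₀, hx₀0, hx₀⟩ := S14.exists_small_mex C c₀ hc₀ hc₀min hy₀1
      set C₁ := 1 + |x₀| with hC₁def
      have hC₁1 : (1:ℝ) ≤ C₁ := le_add_of_nonneg_right (abs_nonneg x₀)
      have hC₁pos : (0:ℝ) < C₁ := lt_of_lt_of_le one_pos hC₁1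
      clear_value C₁
      set ρ := min ((t' - y₀)/2) (gap/(4*C₁+4)) with hρdef
      have hρpos : 0 < ρ := lt_min (by linarith) (div_pos hgap (by linarith))
      have hρ1 : ρ ≤ (t' - y₀)/2 := min_le_left _ _
      have hρ2 : ρ ≤ gap/(4*C₁+4) := min_le_right _ _
      clear_value ρ
      set tρ := min (t - ρ) C.tUp with htρdef
      have htρ_le : tρ ≤ t' := min_le_min (by linarith) le_rfl
      have htρ_ge : t' - ρ ≤ tρ := le_min (by linarith) (by linarith)
      have htρ_lt_t : tρ < t := lt_of_le_of_lt (min_le_left _ _) (by linarith)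
      have hy₀tρ : y₀ < tρ := by linarith
      have hx₀1 : x₀ ≤ 1 := le_trans hx₀0 zero_le_one
      have hIcc : tρ ∈ Set.Icc (S14.mex C x₀) (S14.mex C 1) := by
        rw [S14.mex_one]
        exact ⟨by linarith, le_trans htρ_le ht'_le_tUp⟩
      obtain ⟨lam, hlammem, hlammex⟩ := intermediate_value_Icc hx₀1
        ((S14.continuous_mex C).continuousOn) hIcc
      have hlam1 : lam ≤ 1 := hlammem.2
      have hlamlow : x₀ ≤ lam := hlammem.1
      have habs_lam : |lam| ≤ C₁ := by
        rw [abs_le]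
        constructor
        · have := neg_abs_le x₀
          linarith
        · linarith
      have h1lam : 1 - lam ≤ C₁ := by
        have := neg_abs_le x₀
        linarith
      have h1lam0 : 0 ≤ 1 - lam := by linarith
      have hrate_tρ : C.rate tρ = lam * tρ - Real.log (S14.Z C lam) + Real.log (C.M:ℝ) := by
        rw [← hlammex, S14.rate_at_mex, hlammex]
      have hrate_t'_ge : lam * t' - Real.log (S14.Z C lam) + Real.log (C.M:ℝ) ≤ C.rate t' := by
        rw [← hlam0mex]
        exact S14.rate_ge C lam0 lam
      have hratediff : C.rate tρ ≤ C.rate t' + C₁ * ρ := by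
        have hd1 : C.rate tρ - C.rate t' ≤ lam * (tρ - t') := by
          rw [hrate_tρ]
          have : lam * tρ - lam * t' = lam * (tρ - t') := by ring
          linarith
        have hd2 : lam * (tρ - t') ≤ |lam| * |tρ - t'| := by
          calc lam * (tρ - t') ≤ |lam * (tρ - t')| := le_abs_self _
            _ = |lam| * |tρ - t'| := abs_mul _ _
        have hd3 : |lam| * |tρ - t'| ≤ C₁ * ρ :=
          mul_le_mul habs_lam (abs_le.mpr ⟨by linarith, by linarith⟩) (abs_nonneg _)
            (le_of_lt hC₁pos)
        linarith
      have hV : c + gap/2 ≤ (1 - lam) * tρ + Real.log (S14.Z C lam) := by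
        have hVeq : (1 - lam) * tρ + Real.log (S14.Z C lam)
            = tρ + Real.log (C.M:ℝ) - C.rate tρ := by
          rw [hrate_tρ]
          ring
        rw [hVeq]
        have hρbound : (C₁ + 1) * ρ ≤ gap/4 := by
          have hb1 : (C₁ + 1) * ρ ≤ (C₁ + 1) * (gap/(4*C₁+4)) :=
            mul_le_mul_of_nonneg_left hρ2 (by linarith)
          have hb2 : (C₁ + 1) * (gap/(4*C₁+4)) = gap/4 := by
            field_simp [ne_of_gt (show (0:ℝ) < 4*C₁+4 by linarith)]
          linarith
        have hcgap : c + gap = t' + Real.log (C.M:ℝ) - C.rate t' := by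
          rw [hgapdef]
          ring
        calc c + gap/2 ≤ c + gap - gap/4 := by linarith
          _ ≤ t' - ρ + Real.log (C.M:ℝ) - C.rate t' - C₁ * ρ := by linarith
          _ ≤ tρ + Real.log (C.M:ℝ) - C.rate tρ := by linarith
      set ς := gap/(4*C₁) with hςdef
      clear_value ς
      have hςpos : 0 < ς := by
        rw [hςdef]
        exact div_pos hgap (by linarith)
      have hc' : c + gap/4 ≤ (1 - lam) * (tρ - ς) + Real.log (S14.Z C lam) := by
        have hbnd : (1 - lam) * ς ≤ C₁ * ς := mul_le_mul_of_nonneg_right h1lam (le_of_lt hςpos)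
        have hCς : C₁ * ς = gap/4 := by
          rw [hςdef]
          field_simp [ne_of_gt hC₁pos]
        have hexp : (1 - lam) * (tρ - ς) = (1 - lam) * tρ - (1 - lam) * ς := by ring
        linarith
      have hαmex : tρ - ς < S14.mex C lam := by rw [hlammex]; linarith
      have hmext : S14.mex C lam < t := by rw [hlammex]; exact htρ_lt_t
      have hev := hlower t lam (tρ - ς) hℓt.le hlam1 hαmex hmext
      have hev2 : ∀ᶠ J : ℕ in Filter.atTop, Real.log 2 / (J:ℝ) < gap/4 :=
        (tendsto_const_div_atTop_nhds_zero_nat (Real.log 2)).eventually_lt_const (by positivity)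
      filter_upwards [hev, hev2] with J h₁ h₂
      linarith
    · -- upper bound
      intro b hb
      filter_upwards [Filter.eventually_ge_atTop 1] with J hJ
      have h1 := hupper t lam0 hℓt.le hlam0le J hJ
      have h2 : (1 - lam0) * t + Real.log (S14.Z C lam0)
          = t' + Real.log (C.M:ℝ) - C.rate t' := by
        rw [hLeq, hlam0t]
      calc (1 / (J:ℝ)) * Real.log (Nat.card {w : Fin J → {a // a ∈ C.A} //
            (1 / (J : ℝ)) * ∑ j : Fin J, Real.log (C.colCount (φ (w j))) ≤ t})
          ≤ (1 - lam0) * t + Real.log (S14.Z C lam0) := h1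
        _ = t' + Real.log (C.M:ℝ) - C.rate t' := h2
        _ < b := hb
  · -- part (b)
    intro t hinf htLow
    haveI hne : Nonempty {c // c ∈ C.cols} := ⟨⟨c₀, hc₀⟩⟩
    have hinf_eq : (⨅ j : {c // c ∈ C.cols}, Real.log (C.colCount j.1)) = S14.Lg C c₀ := by
      apply le_antisymm
      · exact ciInf_le
          ((Set.finite_range fun j : {c // c ∈ C.cols} => Real.log (C.colCount j.1 : ℝ)).bddBelow)
          (⟨c₀, hc₀⟩ : {c // c ∈ C.cols})
      · exact le_ciInf fun j => hc₀min j.1 j.2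
    have hℓt : S14.Lg C c₀ < t := by
      rw [hinf_eq] at hinf
      exact hinf
    have hcb : Filter.IsCoboundedUnder (· ≤ ·) Filter.atTop
        (fun J : ℕ => (1 / (J : ℝ)) * Real.log
          (Nat.card {w : Fin J → {a // a ∈ C.A} //
            (1 / (J : ℝ)) * ∑ j : Fin J, Real.log (C.colCount (φ (w j))) ≤ t})) := by
      apply Filter.IsBoundedUnder.isCoboundedUnder_le
      refine ⟨0, Filter.eventually_map.mpr (Filter.Eventually.of_forall fun J => ?_)⟩
      exact mul_nonneg (by positivity) (Real.log_natCast_nonneg _)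
    have hev : ∀ᶠ J : ℕ in Filter.atTop,
        (1 / (J : ℝ)) * Real.log
          (Nat.card {w : Fin J → {a // a ∈ C.A} //
            (1 / (J : ℝ)) * ∑ j : Fin J, Real.log (C.colCount (φ (w j))) ≤ t})
          ≤ t + Real.log (C.M : ℝ) := by
      filter_upwards [Filter.eventually_ge_atTop 1] with J hJ
      have h1 := hupper t 0 hℓt.le (by norm_num) J hJ
      rw [S14.Z_zero] at h1
      simpa using h1
    exact ⟨Filter.limsup_le_of_le hcb hev, by linarith⟩
end
end

section
/- Let Λ be a Bedford–McMullen carpet with non-uniform vertical fibres. Let t ∈ (t̲, max_ĵ log N_ĵ) and s = t/log n + (log M)/(log m). Then lim_{J→∞} (1/J)·log #{ ī ∈ {1,…,M}^J : ψ_{ī|J}(s) > 1 } = H(Q*_t). -/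
open Filter Set MeasureTheory
open scoped ENNReal NNReal Topology

noncomputable section

/-! ### Auxiliary large-deviation counting machinery -/

namespace BMAux

open Finset Real Filter

section Marg
variable {ι : Type*} [Fintype ι] [DecidableEq ι]

lemma marg1 (p : ι → ℝ) (hp : ∑ j, p j = 1) {J : ℕ} (F : ι → ℝ) (i0 : Fin J) :
    ∑ w : Fin J → ι, (∏ i, p (w i)) * F (w i0) = ∑ j, p j * F j := by
  classical
  set f : Fin J → ι → ℝ := fun i j => if i = i0 then p j * F j else p j with hf
  have key : ∀ w : Fin J → ι, (∏ i, p (w i)) * F (w i0) = ∏ i, f i (w i) := by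
    intro w
    rw [← Finset.mul_prod_erase univ (fun i => f i (w i)) (Finset.mem_univ i0)]
    have : ∏ i ∈ univ.erase i0, f i (w i) = ∏ i ∈ univ.erase i0, p (w i) := by
      apply Finset.prod_congr rfl
      intro i hi
      simp [hf, (Finset.mem_erase.mp hi).1]
    rw [this, ← Finset.mul_prod_erase univ (fun i => p (w i)) (Finset.mem_univ i0)]
    have : f i0 (w i0) = p (w i0) * F (w i0) := by simp [hf]
    rw [this]; ring
  have h2 : ∑ w ∈ Fintype.piFinset (fun _ : Fin J => (univ : Finset ι)), ∏ i, f i (w i)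
      = ∏ i, ∑ j, f i j := (Finset.prod_univ_sum _ f).symm
  rw [Fintype.piFinset_univ] at h2
  rw [Finset.sum_congr rfl (fun w _ => key w), h2]
  have : ∀ i : Fin J, ∑ j, f i j = if i = i0 then ∑ j, p j * F j else 1 := by
    intro i
    by_cases h : i = i0 <;> simp [hf, h, hp]
  rw [Finset.prod_congr rfl (fun i _ => this i), Finset.prod_ite_eq' univ i0
    (fun _ => ∑ j, p j * F j)]
  simp

lemma marg2 (p : ι → ℝ) (hp : ∑ j, p j = 1) {J : ℕ} (F G : ι → ℝ) (i0 i1 : Fin J)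
    (h01 : i0 ≠ i1) :
    ∑ w : Fin J → ι, (∏ i, p (w i)) * (F (w i0) * G (w i1))
      = (∑ j, p j * F j) * (∑ j, p j * G j) := by
  classical
  set f : Fin J → ι → ℝ := fun i j => if i = i0 then p j * F j else if i = i1 then p j * G j else p j
    with hf
  have hi1 : i1 ∈ univ.erase i0 := Finset.mem_erase.mpr ⟨Ne.symm h01, Finset.mem_univ i1⟩
  have key : ∀ w : Fin J → ι, (∏ i, p (w i)) * (F (w i0) * G (w i1)) = ∏ i, f i (w i) := by
    intro w
    rw [← Finset.mul_prod_erase univ (fun i => f i (w i)) (Finset.mem_univ i0),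
      ← Finset.mul_prod_erase (univ.erase i0) (fun i => f i (w i)) hi1]
    have e0 : f i0 (w i0) = p (w i0) * F (w i0) := by simp [hf]
    have e1 : f i1 (w i1) = p (w i1) * G (w i1) := by simp [hf, Ne.symm h01]
    have erest : ∏ i ∈ (univ.erase i0).erase i1, f i (w i)
        = ∏ i ∈ (univ.erase i0).erase i1, p (w i) := by
      apply Finset.prod_congr rfl
      intro i hi
      have h1 : i ≠ i1 := (Finset.mem_erase.mp hi).1
      have h0 : i ≠ i0 := (Finset.mem_erase.mp (Finset.mem_erase.mp hi).2).1
      simp [hf, h0, h1]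
    rw [e0, e1, erest,
      ← Finset.mul_prod_erase univ (fun i => p (w i)) (Finset.mem_univ i0),
      ← Finset.mul_prod_erase (univ.erase i0) (fun i => p (w i)) hi1]
    ring
  have h2 : ∑ w ∈ Fintype.piFinset (fun _ : Fin J => (univ : Finset ι)), ∏ i, f i (w i)
      = ∏ i, ∑ j, f i j := (Finset.prod_univ_sum _ f).symm
  rw [Fintype.piFinset_univ] at h2
  rw [Finset.sum_congr rfl (fun w _ => key w), h2]
  have hsums : ∀ i : Fin J, ∑ j, f i j
      = if i = i0 then ∑ j, p j * F j else if i = i1 then ∑ j, p j * G j else 1 := by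
    intro i
    by_cases h : i = i0
    · simp [hf, h]
    · by_cases h' : i = i1 <;> simp [hf, h, h', hp]
  rw [Finset.prod_congr rfl (fun i _ => hsums i),
    ← Finset.mul_prod_erase univ _ (Finset.mem_univ i0),
    ← Finset.mul_prod_erase (univ.erase i0) _ hi1]
  have erest : ∏ i ∈ (univ.erase i0).erase i1,
      (if i = i0 then ∑ j, p j * F j else if i = i1 then ∑ j, p j * G j else 1) = 1 := by
    apply Finset.prod_eq_one
    intro i hi
    have h1 : i ≠ i1 := (Finset.mem_erase.mp hi).1
    have h0 : i ≠ i0 := (Finset.mem_erase.mp (Finset.mem_erase.mp hi).2).1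
    simp [h0, h1]
  rw [erest, if_pos rfl, if_neg (Ne.symm h01), if_pos rfl]
  ring

end Marg
section Mom
variable {ι : Type*} [Fintype ι] [DecidableEq ι]

lemma second_moment (p : ι → ℝ) (hp : ∑ j, p j = 1) (c : ι → ℝ)
    (hc : ∑ j, p j * c j = 0) (J : ℕ) :
    ∑ w : Fin J → ι, (∏ i, p (w i)) * (∑ i, c (w i)) ^ 2
      = (J : ℝ) * ∑ j, p j * (c j) ^ 2 := by
  classical
  have expand : ∀ w : Fin J → ι, (∏ i, p (w i)) * (∑ i, c (w i)) ^ 2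
      = ∑ i : Fin J, ∑ i' : Fin J, (∏ i'', p (w i'')) * (c (w i) * c (w i')) := by
    intro w
    rw [sq, Finset.sum_mul_sum]
    rw [Finset.mul_sum]
    apply Finset.sum_congr rfl
    intro i _
    rw [Finset.mul_sum]
  rw [Finset.sum_congr rfl (fun w _ => expand w)]
  rw [Finset.sum_comm]
  have inner : ∀ i : Fin J, ∑ w : Fin J → ι, ∑ i' : Fin J,
      (∏ i'', p (w i'')) * (c (w i) * c (w i'))
      = ∑ j, p j * (c j) ^ 2 := by
    intro i
    rw [Finset.sum_comm]
    have term : ∀ i' : Fin J, ∑ w : Fin J → ι, (∏ i'', p (w i'')) * (c (w i) * c (w i'))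
        = if i' = i then ∑ j, p j * (c j) ^ 2 else 0 := by
      intro i'
      by_cases h : i' = i
      · subst h
        rw [if_pos rfl]
        have : ∀ w : Fin J → ι, (∏ i'', p (w i'')) * (c (w i') * c (w i'))
            = (∏ i'', p (w i'')) * (fun j => (c j) ^ 2) (w i') := by
          intro w; simp [sq]
        rw [Finset.sum_congr rfl (fun w _ => this w)]
        exact marg1 p hp (fun j => (c j) ^ 2) i'
      · rw [if_neg h, marg2 p hp c c i i' (fun he => h (he.symm)), hc]
        ring
    rw [Finset.sum_congr rfl (fun i' _ => term i'), Finset.sum_ite_eq' univ i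
      (fun _ => ∑ j, p j * (c j) ^ 2)]
    simp
  rw [Finset.sum_congr rfl (fun i _ => inner i), Finset.sum_const, Finset.card_univ]
  simp [nsmul_eq_mul]

lemma chebyshev (p : ι → ℝ) (hp0 : ∀ j, 0 ≤ p j) (hp : ∑ j, p j = 1) (c : ι → ℝ)
    (hc : ∑ j, p j * c j = 0) (J : ℕ) (r : ℝ) (hr : 0 < r) :
    ∑ w ∈ univ.filter (fun w : Fin J → ι => r ≤ |∑ i, c (w i)|), ∏ i, p (w i)
      ≤ ((J : ℝ) * ∑ j, p j * (c j) ^ 2) / r ^ 2 := by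
  classical
  have step1 : ∑ w ∈ univ.filter (fun w : Fin J → ι => r ≤ |∑ i, c (w i)|), ∏ i, p (w i)
      ≤ ∑ w ∈ univ.filter (fun w : Fin J → ι => r ≤ |∑ i, c (w i)|),
        (∏ i, p (w i)) * (∑ i, c (w i)) ^ 2 / r ^ 2 := by
    apply Finset.sum_le_sum
    intro w hw
    have hw' : r ≤ |∑ i, c (w i)| := (Finset.mem_filter.mp hw).2
    have hprod : 0 ≤ ∏ i, p (w i) := Finset.prod_nonneg (fun i _ => hp0 _)
    have hsq : r ^ 2 ≤ (∑ i, c (w i)) ^ 2 := by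
      have h2 := pow_le_pow_left₀ (le_of_lt hr) hw' 2
      rwa [sq_abs] at h2
    rw [le_div_iff₀ (by positivity)]
    calc (∏ i, p (w i)) * r ^ 2 ≤ (∏ i, p (w i)) * (∑ i, c (w i)) ^ 2 :=
          mul_le_mul_of_nonneg_left hsq hprod
      _ = _ := rfl
  refine le_trans step1 ?_
  rw [← Finset.sum_div, ← second_moment p hp c hc J]
  have hr2 : (0:ℝ) < r ^ 2 := pow_pos hr 2
  have hb := Finset.sum_le_sum_of_subset_of_nonneg
    (f := fun w : Fin J → ι => (∏ i, p (w i)) * (∑ i, c (w i)) ^ 2)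
    (Finset.filter_subset (fun w : Fin J → ι => r ≤ |∑ i, c (w i)|) univ)
    (fun w _ _ => mul_nonneg (Finset.prod_nonneg fun _ _ => hp0 _) (sq_nonneg _))
  gcongr

end Mom

variable {ι : Type*} [Fintype ι] [Nonempty ι]


lemma sum_prod_pi' (p : ι → ℝ) (J : ℕ) :
    ∑ w : Fin J → ι, ∏ i, p (w i) = (∑ j, p j) ^ J := by
  classical
  rw [← Fintype.piFinset_univ, ← Finset.prod_univ_sum (fun _ : Fin J => (univ : Finset ι))
    (fun _ j => p j)]
  simp

noncomputable def Zf (a : ι → ℝ) (l : ℝ) : ℝ := ∑ j, Real.exp (l * a j)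

noncomputable def muf (a : ι → ℝ) (l : ℝ) : ℝ :=
  (∑ j, a j * Real.exp (l * a j)) / Zf a l

lemma Zf_pos (a : ι → ℝ) (l : ℝ) : 0 < Zf a l :=
  Finset.sum_pos (fun j _ => Real.exp_pos _) Finset.univ_nonempty

lemma contZ (a : ι → ℝ) : Continuous (Zf a) :=
  continuous_finset_sum _ fun j _ => Real.continuous_exp.comp (continuous_id.mul continuous_const)

lemma contMu (a : ι → ℝ) : Continuous (muf a) := by
  apply Continuous.div
  · exact continuous_finset_sum _ fun j _ =>
      continuous_const.mul (Real.continuous_exp.comp (continuous_id.mul continuous_const))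
  · exact contZ a
  · exact fun l => ne_of_gt (Zf_pos a l)

lemma muf_zero (a : ι → ℝ) : muf a 0 = (∑ j, a j) / (Fintype.card ι : ℝ) := by
  simp [muf, Zf, Finset.card_univ]

lemma exists_mu_gt (a : ι → ℝ) (t : ℝ) (hu : ∃ j, t < a j) :
    ∃ l : ℝ, 0 ≤ l ∧ t < muf a l := by
  classical
  obtain ⟨j1, hj1⟩ := hu
  obtain ⟨j0, -, hj0⟩ := Finset.exists_max_image (univ : Finset ι) a ⟨j1, Finset.mem_univ j1⟩
  have hj0t : t < a j0 := lt_of_lt_of_le hj1 (hj0 j1 (Finset.mem_univ j1))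
  set g : ℝ → ℝ := fun l => ∑ j, (a j - t) * Real.exp (l * (a j - a j0)) with hg
  have hterm : ∀ j : ι, Tendsto (fun l => (a j - t) * Real.exp (l * (a j - a j0))) atTop
      (nhds (if a j = a j0 then a j - t else 0)) := by
    intro j
    by_cases h : a j = a j0
    · simp [h]
    · rw [if_neg h]
      have hlt : a j - a j0 < 0 := sub_neg.mpr (lt_of_le_of_ne (hj0 j (Finset.mem_univ j)) h)
      have h1 : Tendsto (fun l : ℝ => l * (a j - a j0)) atTop atBot :=
        tendsto_id.atTop_mul_const_of_neg hlt
      have h2 : Tendsto (fun l : ℝ => Real.exp (l * (a j - a j0))) atTop (nhds 0) :=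
        Real.tendsto_exp_atBot.comp h1
      simpa using h2.const_mul (a j - t)
  have hgL : Tendsto g atTop (nhds (∑ j, if a j = a j0 then a j - t else 0)) :=
    tendsto_finset_sum _ (fun j _ => hterm j)
  have hLpos : 0 < ∑ j, if a j = a j0 then a j - t else 0 := by
    apply Finset.sum_pos'
    · intro j _
      by_cases h : a j = a j0
      · rw [if_pos h, h]; linarith
      · simp [h]
    · exact ⟨j0, Finset.mem_univ j0, by simp [sub_pos.mpr hj0t]⟩
  have hev : ∀ᶠ l : ℝ in atTop, 0 < g l := hgL.eventually (eventually_gt_nhds hLpos)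
  obtain ⟨l, hl0, hlg⟩ := (hev.and (eventually_ge_atTop (0:ℝ))).exists
  refine ⟨l, hlg, ?_⟩
  have key : g l = Real.exp (-(l * a j0)) * ((∑ j, a j * Real.exp (l * a j)) - t * Zf a l) := by
    rw [hg]
    simp only [Zf, Finset.mul_sum, ← Finset.sum_sub_distrib]
    apply Finset.sum_congr rfl
    intro j _
    rw [show l * (a j - a j0) = l * a j + -(l * a j0) by ring, Real.exp_add]
    ring
  have hZ := Zf_pos a l
  have hnum : t * Zf a l < ∑ j, a j * Real.exp (l * a j) := by
    have hexp : 0 < Real.exp (-(l * a j0)) := Real.exp_pos _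
    nlinarith [hl0, key]
  rw [muf, lt_div_iff₀ hZ]
  linarith

lemma exists_lstar (a : ι → ℝ) (t : ℝ) (hl : (∑ j, a j) / (Fintype.card ι : ℝ) < t)
    (hu : ∃ j, t < a j) : ∃ l : ℝ, 0 ≤ l ∧ muf a l = t ∧
      ∀ ε > 0, ∃ l' : ℝ, t < muf a l' ∧ l ≤ l' ∧ l' < l + ε := by
  classical
  set S : Set ℝ := {l : ℝ | 0 ≤ l ∧ t < muf a l} with hSdef
  obtain ⟨l0, hl0, hl0t⟩ := exists_mu_gt a t hu
  have hS : S.Nonempty := ⟨l0, hl0, hl0t⟩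
  have hbd : BddBelow S := ⟨0, fun x hx => hx.1⟩
  set ls := sInf S with hls
  have h0 : 0 ≤ ls := le_csInf hS (fun x hx => hx.1)
  have happrox : ∀ ε > 0, ∃ l' ∈ S, l' < ls + ε := by
    intro ε hε
    obtain ⟨l', hl', hlt⟩ := Real.lt_sInf_add_pos hS hε
    exact ⟨l', hl', hlt⟩
  have hlb : ∀ l' ∈ S, ls ≤ l' := fun l' hl' => csInf_le hbd hl'
  have hge : t ≤ muf a ls := by
    by_contra hcon
    push_neg at hcon
    have : {l : ℝ | muf a l < t} ∈ nhds ls :=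
      (isOpen_lt (contMu a) continuous_const).mem_nhds hcon
    obtain ⟨δ, hδ, hball⟩ := Metric.mem_nhds_iff.mp this
    obtain ⟨l', hl'S, hlt⟩ := happrox δ hδ
    have : l' ∈ Metric.ball ls δ := by
      rw [Metric.mem_ball, Real.dist_eq, abs_of_nonneg (by linarith [hlb l' hl'S])]
      linarith
    exact absurd hl'S.2 (not_lt.mpr (le_of_lt (hball this)))
  have hle : muf a ls ≤ t := by
    by_contra hcon
    push_neg at hcon
    have hls0 : 0 < ls := by
      rcases eq_or_lt_of_le h0 with h | h
      · exfalso
        rw [← h] at hcon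
        rw [muf_zero a] at hcon
        linarith
      · exact h
    have : {l : ℝ | t < muf a l} ∈ nhds ls :=
      (isOpen_lt continuous_const (contMu a)).mem_nhds hcon
    obtain ⟨δ, hδ, hball⟩ := Metric.mem_nhds_iff.mp this
    set δ' := min δ ls with hδ'
    have hδ'0 : 0 < δ' := lt_min hδ hls0
    set l' := ls - δ' / 2 with hl'
    have hl'ball : l' ∈ Metric.ball ls δ := by
      rw [Metric.mem_ball, Real.dist_eq]
      rw [abs_of_nonpos (by simp [hl']; linarith)]
      simp [hl']
      calc δ' / 2 < δ' := by linarith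
        _ ≤ δ := min_le_left _ _
    have hl'S : l' ∈ S := by
      constructor
      · simp only [hl']
        have : δ' ≤ ls := min_le_right _ _
        linarith
      · exact hball hl'ball
    have := hlb l' hl'S
    simp only [hl'] at this
    linarith
  refine ⟨ls, h0, le_antisymm hle hge, ?_⟩
  intro ε hε
  obtain ⟨l', hl'S, hlt⟩ := happrox ε hε
  exact ⟨l', hl'S.2, hlb l' hl'S, hlt⟩

open Classical in
noncomputable def cnt (a : ι → ℝ) (t : ℝ) (J : ℕ) : ℕ :=
  (univ.filter fun w : Fin J → ι => (J : ℝ) * t < ∑ i, a (w i)).card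

lemma chernoff (a : ι → ℝ) (t : ℝ) (l : ℝ) (hl : 0 ≤ l) (J : ℕ) :
    (cnt a t J : ℝ) ≤ Real.exp ((J : ℝ) * (Real.log (Zf a l) - l * t)) := by
  classical
  have key : (cnt a t J : ℝ) * Real.exp (l * ((J : ℝ) * t)) ≤ (Zf a l) ^ J := by
    rw [cnt]
    calc ((univ.filter fun w : Fin J → ι => (J : ℝ) * t < ∑ i, a (w i)).card : ℝ)
          * Real.exp (l * ((J : ℝ) * t))
        = ∑ _w ∈ (univ.filter fun w : Fin J → ι => (J : ℝ) * t < ∑ i, a (w i)),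
            Real.exp (l * ((J : ℝ) * t)) := by rw [Finset.sum_const, nsmul_eq_mul]
      _ ≤ ∑ w ∈ (univ.filter fun w : Fin J → ι => (J : ℝ) * t < ∑ i, a (w i)),
            Real.exp (l * ∑ i, a (w i)) := by
          apply Finset.sum_le_sum
          intro w hw
          have := (Finset.mem_filter.mp hw).2
          exact Real.exp_le_exp.mpr (mul_le_mul_of_nonneg_left (le_of_lt this) hl)
      _ ≤ ∑ w : Fin J → ι, Real.exp (l * ∑ i, a (w i)) :=
          Finset.sum_le_sum_of_subset_of_nonneg (Finset.filter_subset _ _)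
            (fun w _ _ => le_of_lt (Real.exp_pos _))
      _ = ∑ w : Fin J → ι, ∏ i, Real.exp (l * a (w i)) := by
          apply Finset.sum_congr rfl
          intro w _
          rw [Finset.mul_sum, Real.exp_sum]
      _ = (∑ j, Real.exp (l * a j)) ^ J := sum_prod_pi' (fun j => Real.exp (l * a j)) J
      _ = (Zf a l) ^ J := rfl
  have hZ := Zf_pos a l
  have hZJ : (Zf a l) ^ J = Real.exp ((J : ℝ) * Real.log (Zf a l)) := by
    rw [← Real.exp_log hZ, ← Real.exp_nat_mul]
    simp [Real.exp_log hZ]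
  rw [mul_sub]
  rw [Real.exp_sub, ← hZJ]
  rw [le_div_iff₀ (Real.exp_pos _)]
  calc (cnt a t J : ℝ) * Real.exp ((J:ℝ) * (l * t)) = (cnt a t J : ℝ) * Real.exp (l * ((J:ℝ) * t)) := by
        ring_nf
    _ ≤ (Zf a l) ^ J := key

lemma tilted (a : ι → ℝ) (t : ℝ) (l : ℝ) (hl : 0 ≤ l) (hmu : t < muf a l)
    (δ : ℝ) (hδ : 0 < δ) :
    ∀ᶠ J : ℕ in atTop,
      Real.exp ((J : ℝ) * (Real.log (Zf a l) - l * (muf a l + δ))) * (1/2) ≤ (cnt a t J : ℝ) := by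
  classical
  set μ := muf a l with hμdef
  set Z := Zf a l with hZdef
  have hZ : 0 < Z := Zf_pos a l
  set p : ι → ℝ := fun j => Real.exp (l * a j) / Z with hpdef
  set c : ι → ℝ := fun j => a j - μ with hcdef
  have hp0 : ∀ j, 0 ≤ p j := fun j => div_nonneg (le_of_lt (Real.exp_pos _)) (le_of_lt hZ)
  have hp1 : ∑ j, p j = 1 := by
    rw [hpdef]
    rw [← Finset.sum_div]
    exact div_self (ne_of_gt hZ)
  have hpa : ∑ j, p j * a j = μ := by
    have h1 : ∀ j, p j * a j = a j * Real.exp (l * a j) / Z := fun j => by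
      simp only [hpdef]; ring
    rw [Finset.sum_congr rfl (fun j _ => h1 j), ← Finset.sum_div]
    rfl
  have hc : ∑ j, p j * c j = 0 := by
    simp only [hcdef, mul_sub, Finset.sum_sub_distrib, hpa, ← Finset.sum_mul, hp1]
    ring
  set v : ℝ := ∑ j, p j * (c j) ^ 2 with hvdef
  have hv0 : 0 ≤ v := Finset.sum_nonneg (fun j _ => mul_nonneg (hp0 j) (sq_nonneg _))
  set r0 : ℝ := min (μ - t) δ with hr0def
  have hr0 : 0 < r0 := lt_min (by linarith) hδ
  have hev1 : ∀ᶠ J : ℕ in atTop, (1:ℕ) ≤ J := eventually_ge_atTop 1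
  have hev2 : ∀ᶠ J : ℕ in atTop, 2 * v / r0 ^ 2 ≤ (J : ℝ) :=
    tendsto_natCast_atTop_atTop.eventually_ge_atTop _
  filter_upwards [hev1, hev2] with J hJ1 hJ2
  have hJpos : (0:ℝ) < (J:ℝ) := by exact_mod_cast hJ1
  set pred : (Fin J → ι) → Prop := fun w => (J : ℝ) * r0 ≤ |∑ i, c (w i)| with hpreddef
  have hcheb := chebyshev p hp0 hp1 c hc J ((J:ℝ) * r0) (by positivity)
  have hPBad : ∑ w ∈ univ.filter pred, ∏ i, p (w i) ≤ 1 / 2 := by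
    refine le_trans hcheb ?_
    rw [div_le_div_iff₀ (by positivity) (by norm_num)]
    calc (J:ℝ) * v * 2 ≤ ((J:ℝ) * r0^2) * (J:ℝ) := by
          have : 2 * v ≤ (J:ℝ) * r0 ^2 := by
            rw [div_le_iff₀ (by positivity)] at hJ2
            linarith
          nlinarith [hJpos]
      _ = 1 * ((J:ℝ)*r0)^2 := by ring
  have htot : ∑ w ∈ univ.filter pred, ∏ i, p (w i)
      + ∑ w ∈ univ.filter (fun w => ¬ pred w), ∏ i, p (w i) = 1 := by
    rw [Finset.sum_filter_add_sum_filter_not]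
    rw [sum_prod_pi' p J, hp1, one_pow]
  have hPGood : (1:ℝ)/2 ≤ ∑ w ∈ univ.filter (fun w => ¬ pred w), ∏ i, p (w i) := by
    linarith
  -- each good word is counted and has controlled weight
  have hgoodsub : univ.filter (fun w => ¬ pred w)
      ⊆ univ.filter (fun w : Fin J → ι => (J : ℝ) * t < ∑ i, a (w i)) := by
    intro w hw
    have hw' : ¬ pred w := (Finset.mem_filter.mp hw).2
    rw [hpreddef, not_le] at hw'
    have hsum : ∑ i, c (w i) = (∑ i, a (w i)) - (J:ℝ) * μ := by
      simp [hcdef, Finset.sum_sub_distrib, Finset.card_univ, mul_comm]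
    rw [hsum] at hw'
    have habs := abs_lt.mp hw'
    have hr0le : r0 ≤ μ - t := min_le_left _ _
    refine Finset.mem_filter.mpr ⟨Finset.mem_univ w, ?_⟩
    nlinarith [habs.1]
  have hgoodupper : ∀ w ∈ univ.filter (fun w => ¬ pred w),
      ∑ i, a (w i) ≤ (J:ℝ) * (μ + δ) := by
    intro w hw
    have hw' : ¬ pred w := (Finset.mem_filter.mp hw).2
    rw [hpreddef, not_le] at hw'
    have hsum : ∑ i, c (w i) = (∑ i, a (w i)) - (J:ℝ) * μ := by
      simp [hcdef, Finset.sum_sub_distrib, Finset.card_univ, mul_comm]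
    rw [hsum] at hw'
    have habs := abs_lt.mp hw'
    have hr0le : r0 ≤ δ := min_le_right _ _
    nlinarith [habs.2]
  have hweight : ∀ w ∈ univ.filter (fun w => ¬ pred w),
      ∏ i, p (w i) ≤ Real.exp (l * ((J:ℝ) * (μ + δ))) / Z ^ J := by
    intro w hw
    have : ∏ i, p (w i) = Real.exp (l * ∑ i, a (w i)) / Z ^ J := by
      rw [hpdef]
      rw [Finset.prod_div_distrib, Finset.prod_const, Finset.card_univ, Fintype.card_fin,
        ← Real.exp_sum, ← Finset.mul_sum]
    rw [this]
    gcongr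
    exact hgoodupper w hw
  have hcard : (1:ℝ)/2 ≤ ((univ.filter (fun w => ¬ pred w)).card : ℝ)
      * (Real.exp (l * ((J:ℝ) * (μ + δ))) / Z ^ J) := by
    refine le_trans hPGood ?_
    calc ∑ w ∈ univ.filter (fun w => ¬ pred w), ∏ i, p (w i)
        ≤ ∑ _w ∈ univ.filter (fun w => ¬ pred w),
            Real.exp (l * ((J:ℝ) * (μ + δ))) / Z ^ J := Finset.sum_le_sum hweight
      _ = _ := by rw [Finset.sum_const, nsmul_eq_mul]
  have hcnt : ((univ.filter (fun w => ¬ pred w)).card : ℝ) ≤ (cnt a t J : ℝ) := by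
    have h := Finset.card_le_card hgoodsub
    rw [cnt]
    exact_mod_cast le_trans h (le_of_eq (by congr))
  have hZJ : Z ^ J = Real.exp ((J : ℝ) * Real.log Z) := by
    rw [← Real.exp_log hZ, ← Real.exp_nat_mul]
    simp [Real.exp_log hZ]
  have hexppos : (0:ℝ) < Real.exp (l * ((J:ℝ) * (μ + δ))) := Real.exp_pos _
  have hstep : Real.exp ((J : ℝ) * (Real.log Z - l * (μ + δ))) * (1/2)
      ≤ ((univ.filter (fun w => ¬ pred w)).card : ℝ) := by
    have heq : Real.exp ((J : ℝ) * (Real.log Z - l * (μ + δ)))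
        = Z ^ J / Real.exp (l * ((J:ℝ) * (μ + δ))) := by
      rw [hZJ, ← Real.exp_sub]
      congr 1
      ring
    rw [heq]
    rw [div_mul_eq_mul_div, div_le_iff₀ hexppos]
    calc Z ^ J * (1/2) = (1/2) * Z ^ J := by ring
      _ ≤ (((univ.filter (fun w => ¬ pred w)).card : ℝ)
            * (Real.exp (l * ((J:ℝ) * (μ + δ))) / Z ^ J)) * Z ^ J := by
          apply mul_le_mul_of_nonneg_right hcard (le_of_lt (pow_pos hZ J))
      _ = ((univ.filter (fun w => ¬ pred w)).card : ℝ) * Real.exp (l * ((J:ℝ) * (μ + δ))) := by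
          field_simp
  exact le_trans hstep hcnt

theorem abstractMain (a : ι → ℝ) (t : ℝ)
    (hl : (∑ j, a j) / (Fintype.card ι : ℝ) < t) (hu : ∃ j, t < a j) :
    ∃ l : ℝ, 0 ≤ l ∧ muf a l = t ∧
      Tendsto (fun J : ℕ => (1 / (J : ℝ)) * Real.log (cnt a t J)) atTop
        (nhds (Real.log (Zf a l) - l * t)) := by
  classical
  obtain ⟨ls, hls0, hlsmu, happrox⟩ := exists_lstar a t hl hu
  set E := Real.log (Zf a ls) - ls * t with hE
  refine ⟨ls, hls0, hlsmu, ?_⟩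
  have hEnonneg : 0 ≤ E := by
    obtain ⟨j1, hj1⟩ := hu
    have h1 : Real.exp (ls * a j1) ≤ Zf a ls :=
      Finset.single_le_sum (f := fun j => Real.exp (ls * a j))
        (fun j _ => le_of_lt (Real.exp_pos _)) (Finset.mem_univ j1)
    have h2 : ls * a j1 ≤ Real.log (Zf a ls) := by
      have := Real.log_le_log (Real.exp_pos _) h1
      rwa [Real.log_exp] at this
    have h3 : ls * t ≤ ls * a j1 := mul_le_mul_of_nonneg_left (le_of_lt hj1) hls0
    rw [hE]; linarith
  have hupper : ∀ J : ℕ, 1 ≤ J → (1 / (J : ℝ)) * Real.log (cnt a t J) ≤ E := by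
    intro J hJ
    have hJpos : (0:ℝ) < (J:ℝ) := by exact_mod_cast hJ
    by_cases hc : cnt a t J = 0
    · rw [hc]
      simp only [Nat.cast_zero, Real.log_zero, mul_zero]
      exact hEnonneg
    · have h1 : (0:ℝ) < (cnt a t J : ℝ) := by
        exact_mod_cast Nat.pos_of_ne_zero hc
      have hch := chernoff a t ls hls0 J
      have h2 : Real.log (cnt a t J : ℝ) ≤ (J : ℝ) * E := by
        have := Real.log_le_log h1 hch
        rwa [Real.log_exp, ← hE] at this
      calc (1 / (J:ℝ)) * Real.log (cnt a t J) ≤ (1/(J:ℝ)) * ((J:ℝ) * E) := by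
            apply mul_le_mul_of_nonneg_left h2 (by positivity)
        _ = E := by field_simp
  rw [Metric.tendsto_atTop]
  intro ε hε
  set φ : ℝ → ℝ := fun l => Real.log (Zf a l) - l * muf a l with hφ
  have hφcont : Continuous φ := by
    apply Continuous.sub
    · exact (contZ a).log (fun l => ne_of_gt (Zf_pos a l))
    · exact continuous_id.mul (contMu a)
  have hφls : φ ls = E := by
    show Real.log (Zf a ls) - ls * muf a ls = E
    rw [hlsmu]
  have hU : {l | E - ε/3 < φ l} ∈ nhds ls :=
    (isOpen_lt continuous_const hφcont).mem_nhds (by simp only [Set.mem_setOf_eq, hφls]; linarith)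
  obtain ⟨δ, hδ, hball⟩ := Metric.mem_nhds_iff.mp hU
  have hδ''0 : 0 < min δ 1 := lt_min hδ one_pos
  obtain ⟨l', hl'mu, hl'ge, hl'lt⟩ := happrox (min δ 1) hδ''0
  have hl'ball : l' ∈ Metric.ball ls δ := by
    rw [Metric.mem_ball, Real.dist_eq, abs_of_nonneg (by linarith)]
    have := min_le_left δ 1
    linarith
  have hφl' : E - ε/3 < φ l' := hball hl'ball
  have hl'le : l' ≤ ls + 1 := by
    have := min_le_right δ 1
    linarith
  have hl'0 : 0 ≤ l' := le_trans hls0 hl'ge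
  have hls2 : (0:ℝ) < ls + 2 := by linarith
  set δ0 := ε / (3 * (ls + 2)) with hδ0def
  have hδ0 : 0 < δ0 := by positivity
  have hl'δ0 : l' * δ0 ≤ ε / 3 := by
    have hu : δ0 * (3 * (ls + 2)) = ε := by
      rw [hδ0def]; field_simp
    have h8 : l' * δ0 ≤ (ls + 2) * δ0 :=
      mul_le_mul_of_nonneg_right (by linarith) (le_of_lt hδ0)
    nlinarith [hu, h8]
  have htilt := tilted a t l' hl'0 hl'mu δ0 hδ0
  have hev3 : ∀ᶠ J : ℕ in atTop, Real.log 2 / (J:ℝ) < ε/3 := by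
    have h0 : Tendsto (fun J : ℕ => Real.log 2 / (J:ℝ)) atTop (nhds 0) :=
      tendsto_const_div_atTop_nhds_zero_nat _
    exact h0.eventually (eventually_lt_nhds (by positivity))
  have hcomb := (htilt.and hev3).and (eventually_ge_atTop 1)
  rw [eventually_atTop] at hcomb
  obtain ⟨N, hN⟩ := hcomb
  refine ⟨N, fun J hJ => ?_⟩
  obtain ⟨⟨htiltJ, hev3J⟩, hJ1⟩ := hN J hJ
  have hJpos : (0:ℝ) < (J:ℝ) := by exact_mod_cast hJ1
  have hxle : (1 / (J : ℝ)) * Real.log (cnt a t J) ≤ E := hupper J hJ1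
  have hlbpos : (0:ℝ) < Real.exp ((J : ℝ) * (Real.log (Zf a l') - l' * (muf a l' + δ0))) * (1/2) := by
    positivity
  have hcntpos : (0:ℝ) < (cnt a t J : ℝ) := lt_of_lt_of_le hlbpos htiltJ
  have hloglb : (J:ℝ) * (φ l' - l' * δ0) - Real.log 2 ≤ Real.log (cnt a t J : ℝ) := by
    have := Real.log_le_log hlbpos htiltJ
    rw [Real.log_mul (ne_of_gt (Real.exp_pos _)) (by norm_num), Real.log_exp,
      one_div, Real.log_inv] at this
    calc (J:ℝ) * (φ l' - l' * δ0) - Real.log 2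
        = (J:ℝ) * (Real.log (Zf a l') - l' * (muf a l' + δ0)) + -Real.log 2 := by
          rw [hφ]; ring
      _ ≤ _ := this
  have hxgt : E - ε < (1 / (J : ℝ)) * Real.log (cnt a t J) := by
    have h5 : (φ l' - l' * δ0) - Real.log 2 / (J:ℝ) ≤ (1 / (J : ℝ)) * Real.log (cnt a t J) := by
      have := mul_le_mul_of_nonneg_left hloglb (le_of_lt (one_div_pos.mpr hJpos))
      calc (φ l' - l' * δ0) - Real.log 2 / (J:ℝ)
          = (1/(J:ℝ)) * ((J:ℝ) * (φ l' - l' * δ0) - Real.log 2) := by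
            field_simp
        _ ≤ _ := this
    have h6 : E - ε < (φ l' - l' * δ0) - Real.log 2 / (J:ℝ) := by
      have : Real.log 2 / (J:ℝ) < ε/3 := hev3J
      linarith
    linarith
  rw [Real.dist_eq, abs_of_nonpos (by linarith)]
  linarith


-- Gibbs / Jensen lemma
lemma gibbs {α : Type*} (s : Finset α) (q p : α → ℝ) (hq0 : ∀ c ∈ s, 0 ≤ q c)
    (hq1 : ∑ c ∈ s, q c = 1) (hp : ∀ c ∈ s, 0 < p c) (hp1 : ∑ c ∈ s, p c ≤ 1) :
    ∑ c ∈ s, q c * (Real.log (p c) - Real.log (q c)) ≤ 0 := by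
  classical
  set s' := s.filter (fun c => 0 < q c) with hs'
  have hsub : s' ⊆ s := Finset.filter_subset _ _
  have hq1' : ∑ c ∈ s', q c = 1 := by
    rw [hs', Finset.sum_filter]
    rw [← hq1]
    apply Finset.sum_congr rfl
    intro c hc
    by_cases h : 0 < q c
    · simp [h]
    · simp [h, le_antisymm (not_lt.mp h) (hq0 c hc)]
  have hstep : ∑ c ∈ s, q c * (Real.log (p c) - Real.log (q c))
      = ∑ c ∈ s', q c * (Real.log (p c) - Real.log (q c)) := by
    rw [hs', Finset.sum_filter]
    apply Finset.sum_congr rfl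
    intro c hc
    by_cases h : 0 < q c
    · simp [h]
    · simp [h, le_antisymm (not_lt.mp h) (hq0 c hc)]
  rw [hstep]
  have jensen : ∑ c ∈ s', q c * Real.log (p c / q c) ≤
      Real.log (∑ c ∈ s', q c * (p c / q c)) := by
    have := strictConcaveOn_log_Ioi.concaveOn.le_map_sum
      (t := s') (w := q) (p := fun c => p c / q c)
      (fun c hc => hq0 c (hsub hc)) hq1'
      (fun c hc => by
        have hqc : 0 < q c := (Finset.mem_filter.mp hc).2
        exact Set.mem_Ioi.mpr (div_pos (hp c (hsub hc)) hqc))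
    simpa [smul_eq_mul] using this
  have key : ∑ c ∈ s', q c * (Real.log (p c) - Real.log (q c))
      = ∑ c ∈ s', q c * Real.log (p c / q c) := by
    apply Finset.sum_congr rfl
    intro c hc
    have hqc : 0 < q c := (Finset.mem_filter.mp hc).2
    rw [Real.log_div (ne_of_gt (hp c (hsub hc))) (ne_of_gt hqc)]
  rw [key]
  have hps : ∑ c ∈ s', q c * (p c / q c) = ∑ c ∈ s', p c := by
    apply Finset.sum_congr rfl
    intro c hc
    have hqc : 0 < q c := (Finset.mem_filter.mp hc).2
    field_simp
  calc ∑ c ∈ s', q c * Real.log (p c / q c) ≤ Real.log (∑ c ∈ s', q c * (p c / q c)) := jensen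
    _ = Real.log (∑ c ∈ s', p c) := by rw [hps]
    _ ≤ Real.log 1 := by
        apply Real.log_le_log _ (le_trans (Finset.sum_le_sum_of_subset_of_nonneg hsub
          (fun c hc _ => le_of_lt (hp c hc))) hp1)
        apply Finset.sum_pos (fun c hc => hp c (hsub hc))
        · rw [Finset.nonempty_iff_ne_empty]
          intro h
          rw [h] at hq1'; simp at hq1'
    _ = 0 := Real.log_one


lemma nat_card_subtype_eq {α : Type*} [Fintype α] (p : α → Prop) [DecidablePred p] :
    Nat.card {x // p x} = (Finset.univ.filter p).card := by
  rw [Nat.card_eq_fintype_card, Fintype.card_subtype]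

end BMAux


namespace BMConcrete

open Finset Real Filter BMAux

variable (C : BMData)

lemma M_pos : 0 < C.M := lt_trans zero_lt_one C.one_lt_cols

lemma cols_nonempty : C.cols.Nonempty :=
  Finset.card_pos.mp (lt_trans zero_lt_one C.one_lt_cols)

lemma colCount_pos {c : Fin C.m} (hc : c ∈ C.cols) : 0 < C.colCount c := by
  obtain ⟨p, hp, hpc⟩ := Finset.mem_image.mp hc
  exact Finset.card_pos.mpr ⟨p, Finset.mem_filter.mpr ⟨hp, hpc⟩⟩

lemma log_m_pos : 0 < Real.log C.m :=
  Real.log_pos (by exact_mod_cast lt_of_lt_of_le one_lt_two C.two_le_m)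

lemma log_n_pos : 0 < Real.log C.n :=
  Real.log_pos (by
    have : 2 < C.n := lt_of_le_of_lt C.two_le_m C.m_lt_n
    exact_mod_cast lt_trans one_lt_two this)

/-- The abstract weight function on nonempty columns. -/
noncomputable def aF : {c // c ∈ C.cols} → ℝ := fun j => Real.log (C.colCount j.1)

lemma psi_iff (t s : ℝ) (hs : s = t / Real.log C.n + Real.log C.M / Real.log C.m)
    {J : ℕ} (w : Fin J → {c // c ∈ C.cols}) :
    1 < C.psi s w J ↔ (J : ℝ) * t < ∑ i, aF C (w i) := by
  have hM : (0:ℝ) < (C.M : ℝ) := by exact_mod_cast M_pos C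
  have hn : (0:ℝ) < (C.n : ℝ) := by
    have : 0 < C.n := lt_of_le_of_lt (Nat.zero_le _) C.m_lt_n
    exact_mod_cast this
  have hNpos : ∀ i : Fin J, (0:ℝ) < (C.colCount (w i).1 : ℝ) := fun i => by
    exact_mod_cast colCount_pos C (w i).2
  have hfilter : (Finset.univ.filter (fun l : Fin J => (l : ℕ) < J)) = (Finset.univ : Finset (Fin J)) :=
    Finset.filter_true_of_mem (fun l _ => l.isLt)
  have hprodpos : 0 < ∏ i : Fin J, (C.colCount (w i).1 : ℝ) :=
    Finset.prod_pos (fun i _ => hNpos i)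
  have hpos : 0 < C.psi s w J := by
    rw [BMData.psi, hfilter]
    have h1 : (0:ℝ) < (C.M : ℝ) ^ ((J : ℝ) * C.gamma) := Real.rpow_pos_of_pos hM _
    have h2 : (0:ℝ) < (C.n : ℝ) ^ (-(s * (J:ℝ))) := Real.rpow_pos_of_pos hn _
    positivity
  rw [← Real.log_pos_iff (le_of_lt hpos)]
  have hlog : Real.log (C.psi s w J) = (∑ i, aF C (w i)) - (J : ℝ) * t := by
    rw [BMData.psi, hfilter, Real.log_mul (by positivity) (ne_of_gt hprodpos),
      Real.log_mul (ne_of_gt (Real.rpow_pos_of_pos hM _)) (ne_of_gt (Real.rpow_pos_of_pos hn _)),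
      Real.log_rpow hM, Real.log_rpow hn,
      Real.log_prod (fun i _ => ne_of_gt (hNpos i))]
    have hgoal : ∑ i : Fin J, Real.log ((C.colCount (w i).1 : ℝ)) = ∑ i, aF C (w i) := rfl
    rw [hgoal]
    have hlm : Real.log (C.m : ℝ) ≠ 0 := ne_of_gt (log_m_pos C)
    have hln : Real.log (C.n : ℝ) ≠ 0 := ne_of_gt (log_n_pos C)
    rw [BMData.gamma, hs]
    field_simp
    ring
  rw [hlog]
  exact sub_pos

lemma card_eq (t s : ℝ) (hs : s = t / Real.log C.n + Real.log C.M / Real.log C.m) (J : ℕ) :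
    Nat.card {w : Fin J → {c // c ∈ C.cols} // 1 < C.psi s w J} = cnt (aF C) t J := by
  classical
  rw [nat_card_subtype_eq]
  have hfil : (Finset.univ.filter fun w : Fin J → {c // c ∈ C.cols} => 1 < C.psi s w J)
      = (Finset.univ.filter fun w : Fin J → {c // c ∈ C.cols} => (J : ℝ) * t < ∑ i, aF C (w i)) :=
    Finset.filter_congr (fun w _ => psi_iff C t s hs w)
  rw [hfil, cnt]

lemma entMax_eq (t l : ℝ) (hmu : muf (aF C) l = t) :
    C.entMax t = Real.log (Zf (aF C) l) - l * t := by
  classical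
  haveI : Nonempty {c // c ∈ C.cols} := Finset.nonempty_coe_sort.mpr (cols_nonempty C)
  set Z := Zf (aF C) l with hZdef
  have hZ : 0 < Z := Zf_pos _ l
  have hZsum : Z = ∑ c ∈ C.cols, Real.exp (l * Real.log (C.colCount c)) :=
    Finset.sum_coe_sort C.cols (fun c => Real.exp (l * Real.log (C.colCount c)))
  set pfun : Fin C.m → ℝ := fun c => Real.exp (l * Real.log (C.colCount c)) / Z with hpfun
  have hppos : ∀ c, 0 < pfun c := fun c => div_pos (Real.exp_pos _) hZ
  have hpsum : ∑ c ∈ C.cols, pfun c = 1 := by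
    simp only [hpfun]
    rw [← Finset.sum_div, ← hZsum, div_self (ne_of_gt hZ)]
  have hpt : ∑ c ∈ C.cols, pfun c * Real.log (C.colCount c) = t := by
    have h1 : ∑ c ∈ C.cols, pfun c * Real.log (C.colCount c)
        = (∑ c ∈ C.cols, Real.log (C.colCount c) * Real.exp (l * Real.log (C.colCount c))) / Z := by
      rw [Finset.sum_div]
      refine Finset.sum_congr rfl (fun c _ => ?_)
      simp only [hpfun]; ring
    have h2 : ∑ c ∈ C.cols, Real.log (C.colCount c) * Real.exp (l * Real.log (C.colCount c))
        = ∑ j : {c // c ∈ C.cols}, aF C j * Real.exp (l * aF C j) :=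
      (Finset.sum_coe_sort C.cols
        (fun c => Real.log (C.colCount c) * Real.exp (l * Real.log (C.colCount c)))).symm
    rw [h1, h2]
    exact hmu
  have hlogp : ∀ c, Real.log (pfun c) = l * Real.log (C.colCount c) - Real.log Z := by
    intro c
    simp only [hpfun]
    rw [Real.log_div (ne_of_gt (Real.exp_pos _)) (ne_of_gt hZ), Real.log_exp]
  set q0 : Fin C.m → ℝ := fun c => if c ∈ C.cols then pfun c else 0 with hq0def
  have hq0cols : ∀ c ∈ C.cols, q0 c = pfun c := fun c hc => by simp [hq0def, hc]
  have hmem : (Real.log Z - l * t) ∈ {h : ℝ | ∃ q : Fin C.m → ℝ, (∀ j, 0 ≤ q j) ∧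
      (∀ j ∉ C.cols, q j = 0) ∧ (∑ j ∈ C.cols, q j) = 1 ∧
      (∑ j ∈ C.cols, q j * Real.log (C.colCount j)) = t ∧
      h = -∑ j ∈ C.cols, q j * Real.log (q j)} := by
    refine ⟨q0, ?_, ?_, ?_, ?_, ?_⟩
    · intro j
      by_cases h : j ∈ C.cols
      · simp [hq0def, h, le_of_lt (hppos j)]
      · simp [hq0def, h]
    · intro j hj; simp [hq0def, hj]
    · rw [Finset.sum_congr rfl hq0cols, hpsum]
    · rw [Finset.sum_congr rfl (fun c hc => by rw [hq0cols c hc])]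
      exact hpt
    · have e1 : ∀ c ∈ C.cols, q0 c * Real.log (q0 c)
          = pfun c * (l * Real.log (C.colCount c) - Real.log Z) := by
        intro c hc
        rw [hq0cols c hc, hlogp c]
      rw [Finset.sum_congr rfl e1]
      have e2 : ∑ c ∈ C.cols, pfun c * (l * Real.log (C.colCount c) - Real.log Z)
          = l * t - Real.log Z := by
        have e3 : ∀ c ∈ C.cols, pfun c * (l * Real.log (C.colCount c) - Real.log Z)
            = l * (pfun c * Real.log (C.colCount c)) - Real.log Z * pfun c := fun c _ => by ring
        rw [Finset.sum_congr rfl e3, Finset.sum_sub_distrib, ← Finset.mul_sum, ← Finset.mul_sum,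
          hpt, hpsum]
        ring
      rw [e2]
      ring
  have hbdd : ∀ h ∈ {h : ℝ | ∃ q : Fin C.m → ℝ, (∀ j, 0 ≤ q j) ∧
      (∀ j ∉ C.cols, q j = 0) ∧ (∑ j ∈ C.cols, q j) = 1 ∧
      (∑ j ∈ C.cols, q j * Real.log (C.colCount j)) = t ∧
      h = -∑ j ∈ C.cols, q j * Real.log (q j)}, h ≤ Real.log Z - l * t := by
    rintro h ⟨q, hq0', hqout, hq1, hqt, hh⟩
    have hgibbs := gibbs C.cols q pfun (fun c _ => hq0' c) hq1 (fun c _ => hppos c)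
      (le_of_eq hpsum)
    have hqp : ∑ c ∈ C.cols, q c * Real.log (pfun c) = l * t - Real.log Z := by
      have e1 : ∀ c ∈ C.cols, q c * Real.log (pfun c)
          = l * (q c * Real.log (C.colCount c)) - Real.log Z * q c := by
        intro c _
        rw [hlogp c]; ring
      rw [Finset.sum_congr rfl e1, Finset.sum_sub_distrib, ← Finset.mul_sum, ← Finset.mul_sum,
        hqt, hq1]
      ring
    have expand : ∑ c ∈ C.cols, q c * (Real.log (pfun c) - Real.log (q c))
        = (l * t - Real.log Z) - ∑ c ∈ C.cols, q c * Real.log (q c) := by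
      simp only [mul_sub, Finset.sum_sub_distrib, hqp]
    rw [hh]
    rw [expand] at hgibbs
    linarith
  rw [BMData.entMax]
  exact le_antisymm (csSup_le ⟨_, hmem⟩ hbdd) (le_csSup ⟨_, hbdd⟩ hmem)

end BMConcrete

/-- **Lemma (counting words with `ψ_{ī|J}(s) > 1`).** For `t ∈ (t̲, max_ĵ log N_ĵ)` and
`s = t/log n + log M/log m`, the exponential growth rate of
`#{ī ∈ {1,…,M}^J : ψ_{ī|J}(s) > 1}` is `H(Q*_t)`. -/
theorem statement15 (C : BMData) (hnu : C.NonUniform) (t s : ℝ)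
    (ht1 : C.tLow < t)
    (ht2 : t < ⨆ j : {c // c ∈ C.cols}, Real.log (C.colCount j.1))
    (hs : s = t / Real.log C.n + Real.log C.M / Real.log C.m) :
    Filter.Tendsto (fun J : ℕ => (1 / (J : ℝ)) * Real.log
        (Nat.card {w : Fin J → {c // c ∈ C.cols} // 1 < C.psi s w J}))
      Filter.atTop (nhds (C.entMax t)) := by
  classical
  haveI hne : Nonempty {c // c ∈ C.cols} :=
    Finset.nonempty_coe_sort.mpr (BMConcrete.cols_nonempty C)
  have hMR : (0:ℝ) < (C.M : ℝ) := by exact_mod_cast BMConcrete.M_pos C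
  have hlo : (∑ j, BMConcrete.aF C j) / (Fintype.card {c // c ∈ C.cols} : ℝ) < t := by
    have hcard : (Fintype.card {c // c ∈ C.cols} : ℝ) = (C.M : ℝ) := by
      rw [Fintype.card_coe]; rfl
    have hsum : ∑ j, BMConcrete.aF C j = ∑ c ∈ C.cols, Real.log (C.colCount c) :=
      Finset.sum_coe_sort C.cols (fun c => Real.log (C.colCount c))
    rw [hcard, hsum]
    have h1 := ht1
    simp only [BMData.tLow] at h1
    have h2 : (1 / (C.M : ℝ)) * ∑ c ∈ C.cols, Real.log (C.colCount c)
        = (∑ c ∈ C.cols, Real.log (C.colCount c)) / (C.M : ℝ) := by ring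
    linarith [h2 ▸ h1]
  have hup : ∃ j : {c // c ∈ C.cols}, t < BMConcrete.aF C j :=
    exists_lt_of_lt_ciSup ht2
  obtain ⟨l, hl0, hlmu, htend⟩ := BMAux.abstractMain (BMConcrete.aF C) t hlo hup
  rw [BMConcrete.entMax_eq C t l hlmu]
  refine Filter.Tendsto.congr (fun J => ?_) htend
  rw [BMConcrete.card_eq C t s hs J]
end
end

section
/- Let Λ be a Bedford–McMullen carpet with non-uniform vertical fibres, and set t' = ( ∑_{ĵ=1}^M N_ĵ^{1/γ}·log N_ĵ ) / ( ∑_{ĵ=1}^M N_ĵ^{1/γ} ). Then for every s ≥ dim_H Λ and every t ∈ [min_ĵ log N_ĵ, max_ĵ log N_ĵ], one has T_s(t) ≥ t, with equality if and only if s = dim_H Λ and t = t'. -/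
open Filter Set MeasureTheory
open scoped ENNReal NNReal Topology

noncomputable section

namespace BMAux

/-- `E C l = ∑_ĵ N_ĵ^l`. -/
noncomputable def E (C : BMData) (l : ℝ) : ℝ := ∑ j ∈ C.cols, (C.colCount j : ℝ) ^ l

/-- `G C t l = l t − log((1/M) E l)`. -/
noncomputable def G (C : BMData) (t l : ℝ) : ℝ :=
  l * t - Real.log ((1 / (C.M : ℝ)) * E C l)

lemma rate_eq (C : BMData) (t : ℝ) : C.rate t = ⨆ l : ℝ, G C t l := rfl

variable (C : BMData)

lemma cols_nonempty : C.cols.Nonempty :=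
  Finset.card_pos.mp (lt_trans one_pos C.one_lt_cols)

lemma M_pos : (0 : ℝ) < (C.M : ℝ) := by
  have : (0 : ℕ) < C.M := lt_trans one_pos C.one_lt_cols
  exact_mod_cast this

lemma colCount_pos {j : Fin C.m} (hj : j ∈ C.cols) : (0 : ℝ) < (C.colCount j : ℝ) := by
  obtain ⟨p, hp, hpj⟩ := Finset.mem_image.mp hj
  have : p ∈ C.A.filter fun q => q.1 = j := Finset.mem_filter.mpr ⟨hp, hpj⟩
  have : 0 < C.colCount j := Finset.card_pos.mpr ⟨p, this⟩
  exact_mod_cast this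

lemma E_pos (l : ℝ) : 0 < E C l :=
  Finset.sum_pos (fun j hj => Real.rpow_pos_of_pos (colCount_pos C hj) l) (cols_nonempty C)

lemma log_term (l : ℝ) :
    Real.log ((1 / (C.M : ℝ)) * E C l) = Real.log (E C l) - Real.log (C.M : ℝ) := by
  rw [one_div, Real.log_mul (inv_ne_zero (M_pos C).ne') (E_pos C l).ne', Real.log_inv]
  ring

lemma logm_pos : 0 < Real.log (C.m : ℝ) := by
  apply Real.log_pos; exact_mod_cast lt_of_lt_of_le one_lt_two C.two_le_m

lemma logn_pos : 0 < Real.log (C.n : ℝ) := by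
  apply Real.log_pos
  have : 2 ≤ C.n := le_trans C.two_le_m C.m_lt_n.le
  exact_mod_cast lt_of_lt_of_le one_lt_two this

lemma gamma_pos : 0 < C.gamma := div_pos (logn_pos C) (logm_pos C)

lemma gamma_inv : 1 / C.gamma = Real.log (C.m : ℝ) / Real.log (C.n : ℝ) := by
  unfold BMData.gamma; rw [one_div_div]

/-- Jensen's inequality step: `E l ≥ E(1/γ) · exp((l − 1/γ) t')`. -/
lemma jensen (tp : ℝ)
    (htp : tp = (∑ j ∈ C.cols, (C.colCount j : ℝ) ^ (1 / C.gamma) * Real.log (C.colCount j))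
        / (∑ j ∈ C.cols, (C.colCount j : ℝ) ^ (1 / C.gamma)))
    (l : ℝ) :
    E C (1 / C.gamma) * Real.exp ((l - 1 / C.gamma) * tp) ≤ E C l := by
  set S := E C (1 / C.gamma) with hS
  have hSpos : 0 < S := E_pos C _
  set w : Fin C.m → ℝ := fun j => (C.colCount j : ℝ) ^ (1 / C.gamma) / S with hw
  set x : Fin C.m → ℝ := fun j => (l - 1 / C.gamma) * Real.log (C.colCount j) with hx
  have h₀ : ∀ j ∈ C.cols, 0 ≤ w j := fun j hj =>
    div_nonneg (Real.rpow_pos_of_pos (colCount_pos C hj) _).le hSpos.le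
  have h₁ : ∑ j ∈ C.cols, w j = 1 := by
    rw [hw]
    rw [← Finset.sum_div]
    exact div_self hSpos.ne'
  have hJ := (convexOn_exp).map_sum_le h₀ h₁ (fun j _ => Set.mem_univ (x j))
  simp only [smul_eq_mul] at hJ
  have hsum : ∑ j ∈ C.cols, w j * x j = (l - 1 / C.gamma) * tp := by
    have : ∑ j ∈ C.cols, w j * x j
        = (∑ j ∈ C.cols, (C.colCount j : ℝ) ^ (1 / C.gamma) * Real.log (C.colCount j))
            * ((l - 1 / C.gamma) / S) := by
      rw [Finset.sum_mul]
      refine Finset.sum_congr rfl fun j hj => ?_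
      rw [hw, hx]; ring
    rw [this, htp]; unfold S BMAux.E; ring
  have hexp : ∀ j ∈ C.cols, w j * Real.exp (x j) = (C.colCount j : ℝ) ^ l / S := by
    intro j hj
    have hpos := colCount_pos C hj
    rw [hw, hx]
    have : Real.exp ((l - 1 / C.gamma) * Real.log (C.colCount j))
        = (C.colCount j : ℝ) ^ (l - 1 / C.gamma) := by
      rw [Real.rpow_def_of_pos hpos, mul_comm]
    rw [this]
    rw [div_mul_eq_mul_div, ← Real.rpow_add hpos]
    ring_nf
  rw [hsum] at hJ
  have hE : ∑ j ∈ C.cols, w j * Real.exp (x j) = E C l / S := by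
    rw [Finset.sum_congr rfl hexp, ← Finset.sum_div]; rfl
  rw [hE] at hJ
  calc S * Real.exp ((l - 1 / C.gamma) * tp) ≤ S * (E C l / S) := by
        exact mul_le_mul_of_nonneg_left hJ hSpos.le
    _ = E C l := by field_simp

/-- Derivative of `E`. -/
lemma E_hasDerivAt (l : ℝ) :
    HasDerivAt (E C) (∑ j ∈ C.cols, (C.colCount j : ℝ) ^ l * Real.log (C.colCount j)) l := by
  have : HasDerivAt (fun y => ∑ j ∈ C.cols, (C.colCount j : ℝ) ^ y)
      (∑ j ∈ C.cols, (C.colCount j : ℝ) ^ l * Real.log (C.colCount j)) l :=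
    HasDerivAt.fun_sum fun j hj =>
      (Real.hasStrictDerivAt_const_rpow (colCount_pos C hj) l).hasDerivAt
  exact this

/-- Derivative of `G` at `1/γ`. -/
lemma G_hasDerivAt (t tp : ℝ)
    (htp : tp = (∑ j ∈ C.cols, (C.colCount j : ℝ) ^ (1 / C.gamma) * Real.log (C.colCount j))
        / (∑ j ∈ C.cols, (C.colCount j : ℝ) ^ (1 / C.gamma))) :
    HasDerivAt (G C t) (t - tp) (1 / C.gamma) := by
  set l₀ := 1 / C.gamma
  have hE' := E_hasDerivAt C l₀
  have hne : (1 / (C.M : ℝ)) * E C l₀ ≠ 0 :=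
    (mul_pos (div_pos one_pos (M_pos C)) (E_pos C l₀)).ne'
  have hlog : HasDerivAt (fun y => Real.log ((1 / (C.M : ℝ)) * E C y))
      (((1 / (C.M : ℝ)) * (∑ j ∈ C.cols, (C.colCount j : ℝ) ^ l₀ * Real.log (C.colCount j)))
        / ((1 / (C.M : ℝ)) * E C l₀)) l₀ :=
    (hE'.const_mul (1 / (C.M : ℝ))).log hne
  have hid : HasDerivAt (fun y : ℝ => y * t) t l₀ := hasDerivAt_mul_const t
  have := hid.sub hlog
  refine this.congr_deriv ?_
  have hSne : E C l₀ ≠ 0 := (E_pos C l₀).ne'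
  have hMne : (C.M : ℝ) ≠ 0 := (M_pos C).ne'
  rw [htp]
  have : (∑ j ∈ C.cols, (C.colCount j : ℝ) ^ (1 / C.gamma) * Real.log (C.colCount j))
      / (∑ j ∈ C.cols, (C.colCount j : ℝ) ^ (1 / C.gamma))
      = (∑ j ∈ C.cols, (C.colCount j : ℝ) ^ l₀ * Real.log (C.colCount j)) / E C l₀ := rfl
  rw [this]
  field_simp

end BMAux


/-- **Lemma 4.1.** With `t' = (∑_ĵ N_ĵ^{1/γ} log N_ĵ)/(∑_ĵ N_ĵ^{1/γ})`, for every
`s ≥ dim_H Λ` and every `t ∈ [min_ĵ log N_ĵ, max_ĵ log N_ĵ]` one has `T_s(t) ≥ t`, with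
equality iff `s = dim_H Λ` and `t = t'`. -/
theorem statement17 (C : BMData) (hnu : C.NonUniform) (tp : ℝ)
    (htp : tp = (∑ j ∈ C.cols, (C.colCount j : ℝ) ^ (1 / C.gamma) * Real.log (C.colCount j))
        / (∑ j ∈ C.cols, (C.colCount j : ℝ) ^ (1 / C.gamma)))
    (s : ℝ) (hs : C.dimH ≤ s) (t : ℝ)
    (ht1 : (⨅ j : {c // c ∈ C.cols}, Real.log (C.colCount j.1)) ≤ t)
    (ht2 : t ≤ ⨆ j : {c // c ∈ C.cols}, Real.log (C.colCount j.1)) :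
    t ≤ C.T s t ∧ (C.T s t = t ↔ s = C.dimH ∧ t = tp) := by
  classical
  have hlogm := BMAux.logm_pos C
  have hlogn := BMAux.logn_pos C
  have hγ := BMAux.gamma_pos C
  have hMpos := BMAux.M_pos C
  have hγdef : C.gamma = Real.log (C.n : ℝ) / Real.log (C.m : ℝ) := rfl
  have hγl₀ : C.gamma * (1 / C.gamma) = 1 := mul_one_div_cancel hγ.ne'
  -- dimH in terms of E
  have hdimH : C.dimH = Real.log (BMAux.E C (1 / C.gamma)) / Real.log (C.m : ℝ) := by
    unfold BMData.dimH
    rw [← BMAux.gamma_inv C, one_div_mul_eq_div]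
    rfl
  -- single term lower bound for log E
  have hmono : ∀ j ∈ C.cols, ∀ l : ℝ,
      l * Real.log (C.colCount j) ≤ Real.log (BMAux.E C l) := by
    intro j hj l
    have h1 : (C.colCount j : ℝ) ^ l ≤ BMAux.E C l :=
      Finset.single_le_sum
        (fun i hi => (Real.rpow_pos_of_pos (BMAux.colCount_pos C hi) l).le) hj
    have h2 := Real.log_le_log (Real.rpow_pos_of_pos (BMAux.colCount_pos C hj) l) h1
    rwa [Real.log_rpow (BMAux.colCount_pos C hj)] at h2
  haveI hne : Nonempty {c // c ∈ C.cols} := by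
    obtain ⟨x, hx⟩ := BMAux.cols_nonempty C
    exact ⟨⟨x, hx⟩⟩
  obtain ⟨j0, hj0⟩ := Finite.exists_min
    (fun j : {c // c ∈ C.cols} => Real.log (C.colCount j.1))
  obtain ⟨j1, hj1⟩ := Finite.exists_max
    (fun j : {c // c ∈ C.cols} => Real.log (C.colCount j.1))
  have htmin : Real.log (C.colCount j0.1) ≤ t := le_trans (le_ciInf hj0) ht1
  have htmax : t ≤ Real.log (C.colCount j1.1) := le_trans ht2 (ciSup_le hj1)
  have hub : ∀ l, BMAux.G C t l ≤ Real.log (C.M : ℝ) := by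
    intro l
    unfold BMAux.G
    rw [BMAux.log_term]
    rcases le_or_gt 0 l with h | h
    · have h1 := hmono j1.1 j1.2 l
      have h2 : l * t ≤ l * Real.log (C.colCount j1.1) :=
        mul_le_mul_of_nonneg_left htmax h
      linarith
    · have h1 := hmono j0.1 j0.2 l
      have h2 : l * t ≤ l * Real.log (C.colCount j0.1) :=
        mul_le_mul_of_nonpos_left htmin h.le
      linarith
  have hbdd : BddAbove (Set.range (BMAux.G C t)) :=
    ⟨Real.log (C.M : ℝ), by rintro _ ⟨l, rfl⟩; exact hub l⟩
  have hrate_ge : BMAux.G C t (1 / C.gamma) ≤ C.rate t := by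
    rw [BMAux.rate_eq]; exact le_ciSup hbdd (1 / C.gamma)
  have hG0 : BMAux.G C t (1 / C.gamma)
      = (1 / C.gamma) * t - (Real.log (BMAux.E C (1 / C.gamma)) - Real.log (C.M : ℝ)) := by
    unfold BMAux.G; rw [BMAux.log_term]
  -- key identity
  have htt : (C.dimH - Real.log (C.M : ℝ) / Real.log (C.m : ℝ)) * Real.log (C.n : ℝ)
      + C.gamma * BMAux.G C t (1 / C.gamma) = t := by
    rw [hG0, hdimH, hγdef]
    field_simp
    ring
  have hT : C.T s t = (s - Real.log (C.M : ℝ) / Real.log (C.m : ℝ)) * Real.log (C.n : ℝ)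
      + C.gamma * C.rate t := rfl
  have hTdiff : C.T s t - t = (s - C.dimH) * Real.log (C.n : ℝ)
      + C.gamma * (C.rate t - BMAux.G C t (1 / C.gamma)) := by
    rw [hT]; linear_combination htt
  have h1 : 0 ≤ (s - C.dimH) * Real.log (C.n : ℝ) :=
    mul_nonneg (sub_nonneg.2 hs) hlogn.le
  have h2 : 0 ≤ C.gamma * (C.rate t - BMAux.G C t (1 / C.gamma)) :=
    mul_nonneg hγ.le (sub_nonneg.2 hrate_ge)
  refine ⟨by linarith, ?_⟩
  constructor
  · intro h
    have h0 : (s - C.dimH) * Real.log (C.n : ℝ)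
        + C.gamma * (C.rate t - BMAux.G C t (1 / C.gamma)) = 0 := by linarith
    have e1 : (s - C.dimH) * Real.log (C.n : ℝ) = 0 := by linarith
    have e2 : C.gamma * (C.rate t - BMAux.G C t (1 / C.gamma)) = 0 := by linarith
    have hs' : s = C.dimH := by
      rcases mul_eq_zero.mp e1 with h' | h'
      · linarith [sub_eq_zero.mp h']
      · exact absurd h' hlogn.ne'
    have hrG : C.rate t = BMAux.G C t (1 / C.gamma) := by
      have := (mul_eq_zero.mp e2).resolve_left hγ.ne'
      linarith
    have hmax : ∀ l, BMAux.G C t l ≤ BMAux.G C t (1 / C.gamma) := by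
      intro l
      rw [← hrG, BMAux.rate_eq]
      exact le_ciSup hbdd l
    have hloc : IsLocalMax (BMAux.G C t) (1 / C.gamma) :=
      (isMaxOn_univ_iff.mpr hmax).isLocalMax Filter.univ_mem
    have hz := hloc.hasDerivAt_eq_zero (BMAux.G_hasDerivAt C t tp htp)
    exact ⟨hs', by linarith⟩
  · rintro ⟨hs', ht'⟩
    have hle : ∀ l, BMAux.G C t l ≤ BMAux.G C t (1 / C.gamma) := by
      intro l
      have hJ := BMAux.jensen C tp htp l
      have hlog := Real.log_le_log
        (mul_pos (BMAux.E_pos C (1 / C.gamma)) (Real.exp_pos _)) hJ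
      rw [Real.log_mul (BMAux.E_pos C (1 / C.gamma)).ne' (Real.exp_ne_zero _),
        Real.log_exp] at hlog
      unfold BMAux.G
      rw [BMAux.log_term, BMAux.log_term]
      have hl : l * t = l * tp := by rw [ht']
      nlinarith [hlog]
    have hrG : C.rate t = BMAux.G C t (1 / C.gamma) := by
      rw [BMAux.rate_eq]
      exact le_antisymm (ciSup_le hle) (le_ciSup hbdd (1 / C.gamma))
    have : C.T s t - t = 0 := by
      rw [hTdiff, hs', hrG]; ring
    linarith
end
end

section
/- Let Λ be a Bedford–McMullen carpet with non-uniform vertical fibres, and set t' = ( ∑_{ĵ=1}^M N_ĵ^{1/γ}·log N_ĵ ) / ( ∑_{ĵ=1}^M N_ĵ^{1/γ} ). Then there is a unique t* ∈ (t̲, max_ĵ log N_ĵ) satisfying dim_H Λ = dim_B Λ − (1 − γ^{−1})·I(t*)/log m, and moreover t_1(dim_H Λ) < t' < t*. -/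
open Filter Set MeasureTheory
open scoped ENNReal NNReal Topology

noncomputable section

lemma aux_jensen_log {ι : Type*} {J : Finset ι} {w x : ι → ℝ}
    (hw : ∀ j ∈ J, 0 ≤ w j) (hw1 : ∑ j ∈ J, w j = 1) (hx : ∀ j ∈ J, 0 < x j) :
    ∑ j ∈ J, w j * Real.log (x j) ≤ Real.log (∑ j ∈ J, w j * x j) := by
  have h := strictConcaveOn_log_Ioi.concaveOn.le_map_sum hw hw1
    (fun i hi => Set.mem_Ioi.2 (hx i hi))
  simpa only [smul_eq_mul] using h

lemma aux_jensen_log_strict {ι : Type*} {J : Finset ι} {w x : ι → ℝ}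
    (hw : ∀ j ∈ J, 0 < w j) (hw1 : ∑ j ∈ J, w j = 1) (hx : ∀ j ∈ J, 0 < x j)
    (hne : ∃ j ∈ J, ∃ k ∈ J, x j ≠ x k) :
    ∑ j ∈ J, w j * Real.log (x j) < Real.log (∑ j ∈ J, w j * x j) := by
  have h := strictConcaveOn_log_Ioi.lt_map_sum hw hw1
    (fun i hi => Set.mem_Ioi.2 (hx i hi)) hne
  simpa only [smul_eq_mul] using h

set_option maxHeartbeats 2000000 in
lemma aux_core {ι : Type*} (J : Finset ι) (a : ι → ℝ) (R : ℝ → ℝ) (u tp c tmax : ℝ)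
    (ha : ∀ j ∈ J, 1 ≤ a j) (hM : 2 ≤ J.card)
    (hnu : ∃ i ∈ J, ∃ k ∈ J, a i ≠ a k)
    (hu0 : 0 < u) (hu1 : u < 1)
    (hR : ∀ t, R t = ⨆ l : ℝ, (l * t - Real.log (1 / (J.card : ℝ) * ∑ j ∈ J, a j ^ l)))
    (htp : tp = (∑ j ∈ J, a j ^ u * Real.log (a j)) / ∑ j ∈ J, a j ^ u)
    (hc : c = (u * Real.log (∑ j ∈ J, a j) + (1 - u) * Real.log (J.card : ℝ)
        - Real.log (∑ j ∈ J, a j ^ u)) / (1 - u))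
    (htmax : ∀ j ∈ J, Real.log (a j) ≤ tmax)
    (hattain : ∃ j0 ∈ J, Real.log (a j0) = tmax) :
    (∃! t : ℝ, t ∈ Set.Ioo (1 / (J.card : ℝ) * ∑ j ∈ J, Real.log (a j)) tmax ∧ R t = c) ∧
    ∀ t ∈ Set.Ioo (1 / (J.card : ℝ) * ∑ j ∈ J, Real.log (a j)) tmax, R t = c →
      (Real.log (∑ j ∈ J, a j ^ u) - Real.log (J.card : ℝ)) / u < tp ∧ tp < t := by
  classical
  obtain ⟨i1, hi1, i2, hi2, hne12⟩ := hnu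
  have hJne : J.Nonempty := Finset.card_pos.mp (by omega)
  have hMr0 : (0:ℝ) < (J.card : ℝ) := by exact_mod_cast Nat.pos_of_ne_zero (by omega)
  have ha0 : ∀ j ∈ J, (0:ℝ) < a j := fun j hj => lt_of_lt_of_le one_pos (ha j hj)
  obtain ⟨j0, hj0, hj0max⟩ := hattain
  have hle_max : ∀ j ∈ J, a j ≤ a j0 := by
    intro j hj
    have h1 := htmax j hj
    rw [← hj0max] at h1
    exact (Real.log_le_log_iff (ha0 j hj) (ha0 j0 hj0)).mp h1
  obtain ⟨jlt, hjlt, hjltlt⟩ : ∃ j ∈ J, a j < a j0 := by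
    by_cases h : a i1 = a j0
    · refine ⟨i2, hi2, lt_of_le_of_ne (hle_max i2 hi2) fun hcon => hne12 ?_⟩
      rw [h, hcon]
    · exact ⟨i1, hi1, lt_of_le_of_ne (hle_max i1 hi1) h⟩
  obtain ⟨jmin, hjmin, hjminle⟩ := J.exists_min_image (fun j => Real.log (a j)) hJne
  set tmin := Real.log (a jmin) with htmin_def
  set tlow := 1 / (J.card : ℝ) * ∑ j ∈ J, Real.log (a j) with htlow_def
  set Su := ∑ j ∈ J, a j ^ u with hSu_def
  set G := ∑ j ∈ J, a j ^ u * Real.log (a j) with hG_def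
  set N' := ∑ j ∈ J, a j with hN'_def
  have hSl0 : ∀ l : ℝ, 0 < ∑ j ∈ J, a j ^ l := fun l =>
    Finset.sum_pos (fun j hj => Real.rpow_pos_of_pos (ha0 j hj) l) hJne
  have hSu0 : 0 < Su := hSl0 u
  have hN'0 : 0 < N' := Finset.sum_pos (fun j hj => ha0 j hj) hJne
  have hL : ∀ l : ℝ, Real.log (1 / (J.card : ℝ) * ∑ j ∈ J, a j ^ l)
      = Real.log (∑ j ∈ J, a j ^ l) - Real.log (J.card : ℝ) := by
    intro l
    rw [one_div, Real.log_mul (inv_ne_zero hMr0.ne') (hSl0 l).ne', Real.log_inv]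
    ring
  -- distinctness of powers
  have hrpow_ne : ∀ v : ℝ, v ≠ 0 → a i1 ^ v ≠ a i2 ^ v := by
    intro v hv hcon
    apply hne12
    have h1 := congrArg Real.log hcon
    rw [Real.log_rpow (ha0 i1 hi1), Real.log_rpow (ha0 i2 hi2)] at h1
    have h2 : Real.log (a i1) = Real.log (a i2) := mul_left_cancel₀ hv h1
    rw [← Real.exp_log (ha0 i1 hi1), ← Real.exp_log (ha0 i2 hi2), h2]
  -- the weight vector
  have hw_pos : ∀ j ∈ J, 0 < a j ^ u / Su := fun j hj =>
    div_pos (Real.rpow_pos_of_pos (ha0 j hj) u) hSu0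
  have hw1 : ∑ j ∈ J, a j ^ u / Su = 1 := by
    rw [← Finset.sum_div, ← hSu_def, div_self hSu0.ne']
  have hwlog : ∑ j ∈ J, a j ^ u / Su * Real.log (a j) = tp := by
    rw [htp, hG_def, Finset.sum_div]
    exact Finset.sum_congr rfl fun j hj => by ring
  -- tangent line bound
  have htan : ∀ l : ℝ, l * tp - Real.log (∑ j ∈ J, a j ^ l) ≤ u * tp - Real.log Su := by
    intro l
    have hx : ∀ j ∈ J, (0:ℝ) < a j ^ (l - u) := fun j hj => Real.rpow_pos_of_pos (ha0 j hj) _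
    have hjen := aux_jensen_log (w := fun j => a j ^ u / Su) (x := fun j => a j ^ (l - u))
      (fun j hj => (hw_pos j hj).le) hw1 hx
    have h1 : ∑ j ∈ J, a j ^ u / Su * Real.log (a j ^ (l - u)) = (l - u) * tp := by
      rw [← hwlog, Finset.mul_sum]
      refine Finset.sum_congr rfl fun j hj => ?_
      rw [Real.log_rpow (ha0 j hj)]
      ring
    have h2 : ∑ j ∈ J, a j ^ u / Su * a j ^ (l - u) = (∑ j ∈ J, a j ^ l) / Su := by
      rw [Finset.sum_div]
      refine Finset.sum_congr rfl fun j hj => ?_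
      rw [div_mul_eq_mul_div, ← Real.rpow_add (ha0 j hj)]
      have h3 : u + (l - u) = l := by ring
      rw [h3]
    rw [h1, h2, Real.log_div (hSl0 l).ne' hSu0.ne', sub_mul] at hjen
    linarith
  -- strict entropy bound  (phi(u) > 0)
  have hphi : Real.log Su - Real.log (J.card : ℝ) < u * tp := by
    have hxpos : ∀ j ∈ J, (0:ℝ) < Su / ((J.card : ℝ) * a j ^ u) := fun j hj =>
      div_pos hSu0 (mul_pos hMr0 (Real.rpow_pos_of_pos (ha0 j hj) u))
    have hlog : ∀ j ∈ J, Real.log (Su / ((J.card : ℝ) * a j ^ u))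
        = Real.log Su - Real.log (J.card : ℝ) - u * Real.log (a j) := by
      intro j hj
      rw [Real.log_div hSu0.ne' (mul_pos hMr0 (Real.rpow_pos_of_pos (ha0 j hj) u)).ne',
        Real.log_mul hMr0.ne' (Real.rpow_pos_of_pos (ha0 j hj) u).ne',
        Real.log_rpow (ha0 j hj)]
      ring
    have hxne : Su / ((J.card : ℝ) * a i1 ^ u) ≠ Su / ((J.card : ℝ) * a i2 ^ u) := by
      intro hcon
      have h1 := congrArg Real.log hcon
      rw [hlog i1 hi1, hlog i2 hi2] at h1
      have h2 : Real.log (a i1) = Real.log (a i2) := mul_left_cancel₀ hu0.ne' (by linarith)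
      exact hne12 (by rw [← Real.exp_log (ha0 i1 hi1), ← Real.exp_log (ha0 i2 hi2), h2])
    have hjen := aux_jensen_log_strict (w := fun j => a j ^ u / Su)
      (x := fun j => Su / ((J.card : ℝ) * a j ^ u)) hw_pos hw1 hxpos ⟨i1, hi1, i2, hi2, hxne⟩
    have h1 : ∑ j ∈ J, a j ^ u / Su * (Su / ((J.card : ℝ) * a j ^ u)) = 1 := by
      have he : ∀ j ∈ J, a j ^ u / Su * (Su / ((J.card : ℝ) * a j ^ u)) = 1 / (J.card : ℝ) := by
        intro j hj
        have h3 := (Real.rpow_pos_of_pos (ha0 j hj) u).ne'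
        field_simp
      rw [Finset.sum_congr rfl he, Finset.sum_const, nsmul_eq_mul]
      field_simp
    have h2 : ∑ j ∈ J, a j ^ u / Su * Real.log (Su / ((J.card : ℝ) * a j ^ u))
        = Real.log Su - Real.log (J.card : ℝ) - u * tp := by
      have he : ∀ j ∈ J, a j ^ u / Su * Real.log (Su / ((J.card : ℝ) * a j ^ u))
          = (Real.log Su - Real.log (J.card : ℝ)) * (a j ^ u / Su)
            - u * (a j ^ u / Su * Real.log (a j)) := by
        intro j hj
        rw [hlog j hj]
        ring
      rw [Finset.sum_congr rfl he, Finset.sum_sub_distrib, ← Finset.mul_sum, ← Finset.mul_sum,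
        hw1, hwlog, mul_one]
    rw [h1, h2, Real.log_one] at hjen
    linarith
  -- strict bound  (1-u) tp < log N' - log Su
  have hNlt : (1 - u) * tp < Real.log N' - Real.log Su := by
    have hx : ∀ j ∈ J, (0:ℝ) < a j ^ (1 - u) := fun j hj => Real.rpow_pos_of_pos (ha0 j hj) _
    have hjen := aux_jensen_log_strict (w := fun j => a j ^ u / Su)
      (x := fun j => a j ^ (1 - u)) hw_pos hw1 hx
      ⟨i1, hi1, i2, hi2, hrpow_ne (1 - u) (by linarith)⟩
    have h1 : ∑ j ∈ J, a j ^ u / Su * Real.log (a j ^ (1 - u)) = (1 - u) * tp := by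
      rw [← hwlog, Finset.mul_sum]
      refine Finset.sum_congr rfl fun j hj => ?_
      rw [Real.log_rpow (ha0 j hj)]
      ring
    have h2 : ∑ j ∈ J, a j ^ u / Su * a j ^ (1 - u) = N' / Su := by
      rw [hN'_def, Finset.sum_div]
      refine Finset.sum_congr rfl fun j hj => ?_
      rw [div_mul_eq_mul_div, ← Real.rpow_add (ha0 j hj)]
      have h3 : u + (1 - u) = 1 := by ring
      rw [h3, Real.rpow_one]
    rw [h1, h2, Real.log_div hN'0.ne' hSu0.ne'] at hjen
    exact hjen
  -- c is above phi(u)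
  have h1u : (0:ℝ) < 1 - u := by linarith
  have hc_phi : u * tp - (Real.log Su - Real.log (J.card : ℝ)) < c := by
    have h1 : c - (u * tp - (Real.log Su - Real.log (J.card : ℝ)))
        = u / (1 - u) * (Real.log N' - Real.log Su - (1 - u) * tp) := by
      rw [hc]
      field_simp
      ring
    nlinarith [mul_pos (div_pos hu0 h1u) (by linarith [hNlt] :
      (0:ℝ) < Real.log N' - Real.log Su - (1 - u) * tp)]
  have hc0 : 0 < c := by linarith
  -- the count of maximal columns
  set Kc := J.filter (fun j => a j = a j0) with hKc_def
  have hKc_card : 0 < Kc.card := Finset.card_pos.mpr ⟨j0, Finset.mem_filter.mpr ⟨hj0, rfl⟩⟩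
  have hKr0 : (0:ℝ) < (Kc.card : ℝ) := by exact_mod_cast hKc_card
  have hA0 : (0:ℝ) < a j0 := ha0 j0 hj0
  have hNA : N' < Su * a j0 ^ (1 - u) := by
    have hterm : ∀ j ∈ J, a j = a j ^ u * a j ^ (1 - u) := by
      intro j hj
      rw [← Real.rpow_add (ha0 j hj)]
      have h3 : u + (1 - u) = 1 := by ring
      rw [h3, Real.rpow_one]
    calc N' = ∑ j ∈ J, a j ^ u * a j ^ (1 - u) := Finset.sum_congr rfl hterm
      _ < ∑ j ∈ J, a j ^ u * a j0 ^ (1 - u) :=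
        Finset.sum_lt_sum
          (fun j hj => mul_le_mul_of_nonneg_left
            (Real.rpow_le_rpow (ha0 j hj).le (hle_max j hj) (by linarith))
            (Real.rpow_nonneg (ha0 j hj).le u))
          ⟨jlt, hjlt, mul_lt_mul_of_pos_left
            (Real.rpow_lt_rpow (ha0 jlt hjlt).le hjltlt h1u)
            (Real.rpow_pos_of_pos (ha0 jlt hjlt) u)⟩
      _ = Su * a j0 ^ (1 - u) := by rw [← Finset.sum_mul, ← hSu_def]
  have hKN : (Kc.card : ℝ) * a j0 ≤ N' := by
    have h1 : ∑ j ∈ Kc, a j = (Kc.card : ℝ) * a j0 := by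
      rw [Finset.sum_congr rfl (fun j hj => (Finset.mem_filter.mp hj).2), Finset.sum_const,
        nsmul_eq_mul]
    rw [← h1, hN'_def]
    exact Finset.sum_le_sum_of_subset_of_nonneg (Finset.filter_subset _ _)
      (fun j hj _ => (ha0 j hj).le)
  have hc_lt : c < Real.log (J.card : ℝ) - Real.log (Kc.card : ℝ) := by
    have h1 : Real.log N' < Real.log Su + (1 - u) * Real.log (a j0) := by
      have h5 := Real.log_lt_log hN'0 hNA
      rwa [Real.log_mul hSu0.ne' (Real.rpow_pos_of_pos hA0 _).ne', Real.log_rpow hA0] at h5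
    have h2 : Real.log (Kc.card : ℝ) + Real.log (a j0) ≤ Real.log N' := by
      have h5 : Real.log ((Kc.card : ℝ) * a j0) ≤ Real.log N' :=
        Real.log_le_log (by positivity) hKN
      rwa [Real.log_mul hKr0.ne' hA0.ne'] at h5
    have h3 : (1 - u) * c = u * Real.log N' + (1 - u) * Real.log (J.card : ℝ) - Real.log Su := by
      rw [hc]
      field_simp
    have h4 : (1 - u) * c < (1 - u) * (Real.log (J.card : ℝ) - Real.log (Kc.card : ℝ)) := by
      nlinarith [mul_le_mul_of_nonneg_left
        (by linarith : Real.log (a j0) - Real.log N' ≤ -Real.log (Kc.card : ℝ)) h1u.le,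
        mul_lt_mul_of_pos_left h1 hu0]
    exact lt_of_mul_lt_mul_left h4 h1u.le
  -- tmin/tlow/tmax ordering
  have htminmax : tmin < tmax := by
    refine lt_of_le_of_lt (hjminle jlt hjlt) ?_
    rw [← hj0max]
    exact Real.log_lt_log (ha0 jlt hjlt) hjltlt
  have htlow1 : tmin < tlow := by
    have h1 : (J.card : ℝ) * tmin < ∑ j ∈ J, Real.log (a j) := by
      have h2 := Finset.sum_lt_sum (f := fun _ : ι => tmin) (g := fun j => Real.log (a j))
        (fun j hj => hjminle j hj) ⟨j0, hj0, by show tmin < Real.log (a j0); rw [hj0max]; exact htminmax⟩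
      rwa [Finset.sum_const, nsmul_eq_mul] at h2
    have h3 : 1 / (J.card : ℝ) * ((J.card : ℝ) * tmin) < tlow := by
      rw [htlow_def]
      exact mul_lt_mul_of_pos_left h1 (by positivity)
    have h4 : 1 / (J.card : ℝ) * ((J.card : ℝ) * tmin) = tmin := by field_simp
    linarith
  have htlow2 : tlow < tmax := by
    have h1 : ∑ j ∈ J, Real.log (a j) < (J.card : ℝ) * tmax := by
      have h2 := Finset.sum_lt_sum (f := fun j => Real.log (a j)) (g := fun _ : ι => tmax)
        (fun j hj => htmax j hj)
        ⟨jlt, hjlt, by show Real.log (a jlt) < tmax; rw [← hj0max]; exact Real.log_lt_log (ha0 jlt hjlt) hjltlt⟩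
      rwa [Finset.sum_const, nsmul_eq_mul] at h2
    have h3 : tlow < 1 / (J.card : ℝ) * ((J.card : ℝ) * tmax) := by
      rw [htlow_def]
      exact mul_lt_mul_of_pos_left h1 (by positivity)
    have h4 : 1 / (J.card : ℝ) * ((J.card : ℝ) * tmax) = tmax := by field_simp
    linarith
  -- uniform upper bound and sup interface
  have hub : ∀ t : ℝ, tmin ≤ t → t ≤ tmax → ∀ l : ℝ,
      l * t - Real.log (1 / (J.card : ℝ) * ∑ j ∈ J, a j ^ l) ≤ Real.log (J.card : ℝ) := by
    intro t ht1 ht2 l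
    rw [hL]
    rcases le_or_gt 0 l with hl | hl
    · have h1 : a j0 ^ l ≤ ∑ j ∈ J, a j ^ l :=
        Finset.single_le_sum (fun j hj => (Real.rpow_pos_of_pos (ha0 j hj) l).le) hj0
      have h2 : l * tmax ≤ Real.log (∑ j ∈ J, a j ^ l) := by
        rw [← hj0max, ← Real.log_rpow (ha0 j0 hj0)]
        exact Real.log_le_log (Real.rpow_pos_of_pos (ha0 j0 hj0) l) h1
      have h3 : l * t ≤ l * tmax := mul_le_mul_of_nonneg_left ht2 hl
      linarith
    · have h1 : a jmin ^ l ≤ ∑ j ∈ J, a j ^ l :=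
        Finset.single_le_sum (fun j hj => (Real.rpow_pos_of_pos (ha0 j hj) l).le) hjmin
      have h2 : l * tmin ≤ Real.log (∑ j ∈ J, a j ^ l) := by
        rw [htmin_def, ← Real.log_rpow (ha0 jmin hjmin)]
        exact Real.log_le_log (Real.rpow_pos_of_pos (ha0 jmin hjmin) l) h1
      have h3 : l * t ≤ l * tmin := mul_le_mul_of_nonpos_left ht1 hl.le
      linarith
  have hbdd : ∀ t : ℝ, tmin ≤ t → t ≤ tmax →
      BddAbove (Set.range fun l : ℝ => l * t - Real.log (1 / (J.card : ℝ) * ∑ j ∈ J, a j ^ l)) := by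
    intro t ht1 ht2
    refine ⟨Real.log (J.card : ℝ), ?_⟩
    rintro y ⟨l, rfl⟩
    exact hub t ht1 ht2 l
  have hRge : ∀ t : ℝ, tmin ≤ t → t ≤ tmax → ∀ l : ℝ,
      l * t - Real.log (1 / (J.card : ℝ) * ∑ j ∈ J, a j ^ l) ≤ R t := by
    intro t ht1 ht2 l
    rw [hR]
    exact le_ciSup (hbdd t ht1 ht2) l
  have hRle : ∀ t B : ℝ,
      (∀ l : ℝ, l * t - Real.log (1 / (J.card : ℝ) * ∑ j ∈ J, a j ^ l) ≤ B) → R t ≤ B := by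
    intro t B hB
    rw [hR]
    exact ciSup_le hB
  have hzero : ∀ t : ℝ, (0:ℝ) * t - Real.log (1 / (J.card : ℝ) * ∑ j ∈ J, a j ^ (0:ℝ)) = 0 := by
    intro t
    simp only [Real.rpow_zero, Finset.sum_const, nsmul_eq_mul, mul_one, zero_mul, one_div,
      inv_mul_cancel₀ hMr0.ne', Real.log_one, sub_zero]
  have hR0 : ∀ t : ℝ, tmin ≤ t → t ≤ tmax → 0 ≤ R t := by
    intro t h1 h2
    have h3 := hRge t h1 h2 0
    rw [hzero t] at h3
    exact h3
  have hRtlow : R tlow = 0 := by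
    refine le_antisymm (hRle tlow 0 ?_) (hR0 tlow htlow1.le htlow2.le)
    intro l
    rw [hL]
    have hunif_pos : ∀ j ∈ J, (0:ℝ) ≤ 1 / (J.card : ℝ) := fun j hj => div_nonneg zero_le_one hMr0.le
    have hunif_sum : ∑ _j ∈ J, 1 / (J.card : ℝ) = 1 := by
      rw [Finset.sum_const, nsmul_eq_mul]
      field_simp
    have hjen := aux_jensen_log (J := J) (w := fun _ => 1 / (J.card : ℝ)) (x := fun j => a j ^ l)
      hunif_pos hunif_sum (fun j hj => Real.rpow_pos_of_pos (ha0 j hj) l)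
    have h1 : ∑ j ∈ J, 1 / (J.card : ℝ) * Real.log (a j ^ l) = l * tlow := by
      have he : ∀ j ∈ J, 1 / (J.card : ℝ) * Real.log (a j ^ l)
          = l * (1 / (J.card : ℝ) * Real.log (a j)) := by
        intro j hj
        rw [Real.log_rpow (ha0 j hj)]
        ring
      rw [Finset.sum_congr rfl he, ← Finset.mul_sum, ← Finset.mul_sum, ← htlow_def]
    have h2 : ∑ j ∈ J, 1 / (J.card : ℝ) * a j ^ l = 1 / (J.card : ℝ) * ∑ j ∈ J, a j ^ l :=
      (Finset.mul_sum _ _ _).symm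
    rw [h1, h2, hL] at hjen
    linarith
  have hRtp_le : R tp ≤ u * tp - (Real.log Su - Real.log (J.card : ℝ)) := by
    refine hRle tp _ fun l => ?_
    rw [hL]
    linarith [htan l]
  -- tp within [tmin, tmax]
  have htp1 : tmin ≤ tp := by
    have h1 : ∑ j ∈ J, a j ^ u * tmin ≤ G := by
      rw [hG_def]
      exact Finset.sum_le_sum fun j hj =>
        mul_le_mul_of_nonneg_left (hjminle j hj) (Real.rpow_nonneg (ha0 j hj).le u)
    have h2 : ∑ j ∈ J, a j ^ u * tmin = Su * tmin := by rw [← Finset.sum_mul, ← hSu_def]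
    rw [htp, le_div_iff₀ hSu0, mul_comm]
    linarith
  have htp2 : tp ≤ tmax := by
    have h1 : G ≤ ∑ j ∈ J, a j ^ u * tmax := by
      rw [hG_def]
      exact Finset.sum_le_sum fun j hj =>
        mul_le_mul_of_nonneg_left (htmax j hj) (Real.rpow_nonneg (ha0 j hj).le u)
    have h2 : ∑ j ∈ J, a j ^ u * tmax = Su * tmax := by rw [← Finset.sum_mul, ← hSu_def]
    rw [htp, div_le_iff₀ hSu0, mul_comm tmax Su]
    linarith
  -- convexity of the rate function
  have hconv : ConvexOn ℝ (Set.Icc tmin tmax) R := by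
    refine ⟨convex_Icc _ _, fun x hx y hy p q hp hq hpq => ?_⟩
    simp only [smul_eq_mul]
    refine hRle _ _ fun l => ?_
    have he : l * (p * x + q * y) - Real.log (1 / (J.card : ℝ) * ∑ j ∈ J, a j ^ l)
        = p * (l * x - Real.log (1 / (J.card : ℝ) * ∑ j ∈ J, a j ^ l))
          + q * (l * y - Real.log (1 / (J.card : ℝ) * ∑ j ∈ J, a j ^ l)) := by
      linear_combination (Real.log (1 / (J.card : ℝ) * ∑ j ∈ J, a j ^ l)) * hpq
    rw [he]
    exact add_le_add (mul_le_mul_of_nonneg_left (hRge x hx.1 hx.2 l) hp)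
      (mul_le_mul_of_nonneg_left (hRge y hy.1 hy.2 l) hq)
  have hcont : ContinuousOn R (Set.Ioo tmin tmax) :=
    ConvexOn.continuousOn isOpen_Ioo (hconv.subset Set.Ioo_subset_Icc_self (convex_Ioo _ _))
  -- a point t2 < tmax where the rate exceeds c
  have hKlt : (Kc.card : ℝ) < (J.card : ℝ) * Real.exp (-c) := by
    have h1 : Real.log (Kc.card : ℝ) < Real.log ((J.card : ℝ) * Real.exp (-c)) := by
      rw [Real.log_mul hMr0.ne' (Real.exp_pos _).ne', Real.log_exp]
      linarith
    exact (Real.log_lt_log_iff hKr0 (by positivity)).mp h1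
  have hD : Filter.Tendsto (fun l : ℝ => ∑ j ∈ J, (a j / a j0) ^ l) Filter.atTop
      (𝓝 (Kc.card : ℝ)) := by
    have hKsum : ((Kc.card : ℝ)) = ∑ j ∈ J, (if a j = a j0 then (1:ℝ) else 0) := by
      rw [Finset.sum_boole, hKc_def]
    rw [hKsum]
    refine tendsto_finset_sum _ fun j hj => ?_
    by_cases h : a j = a j0
    · rw [if_pos h]
      show Filter.Tendsto (fun l : ℝ => (a j / a j0) ^ l) Filter.atTop (𝓝 (1:ℝ))
      refine Filter.Tendsto.congr (fun l => ?_) (tendsto_const_nhds (x := (1:ℝ)))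
      rw [h, div_self hA0.ne', Real.one_rpow]
    · rw [if_neg h]
      have hr1 : a j / a j0 < 1 := (div_lt_one hA0).mpr (lt_of_le_of_ne (hle_max j hj) h)
      exact tendsto_rpow_atTop_of_base_lt_one _
        (by nlinarith [div_pos (ha0 j hj) hA0]) hr1
  obtain ⟨l₀, hl₀D, hl₀1⟩ :=
    ((hD.eventually_lt_const hKlt).and (Filter.eventually_ge_atTop 1)).exists
  have hl₀0 : (0:ℝ) < l₀ := lt_of_lt_of_le one_pos hl₀1
  have hD0 : 0 < ∑ j ∈ J, (a j / a j0) ^ l₀ :=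
    Finset.sum_pos (fun j hj => Real.rpow_pos_of_pos (div_pos (ha0 j hj) hA0) _) hJne
  have hSfac : Real.log (∑ j ∈ J, a j ^ l₀)
      = l₀ * tmax + Real.log (∑ j ∈ J, (a j / a j0) ^ l₀) := by
    have he : ∀ j ∈ J, a j ^ l₀ = a j0 ^ l₀ * (a j / a j0) ^ l₀ := by
      intro j hj
      rw [Real.div_rpow (ha0 j hj).le hA0.le]
      field_simp
    rw [Finset.sum_congr rfl he, ← Finset.mul_sum,
      Real.log_mul (Real.rpow_pos_of_pos hA0 _).ne' hD0.ne',
      Real.log_rpow hA0, hj0max]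
  have hhtmax : c < l₀ * tmax - Real.log (1 / (J.card : ℝ) * ∑ j ∈ J, a j ^ l₀) := by
    rw [hL, hSfac]
    have h1 : Real.log (∑ j ∈ J, (a j / a j0) ^ l₀) < Real.log (J.card : ℝ) - c := by
      have h5 := Real.log_lt_log hD0 hl₀D
      rwa [Real.log_mul hMr0.ne' (Real.exp_pos _).ne', Real.log_exp] at h5
    linarith
  set X := l₀ * tmax - Real.log (1 / (J.card : ℝ) * ∑ j ∈ J, a j ^ l₀) with hX_def
  clear_value X
  have hXc : 0 < X - c := by linarith
  obtain ⟨ε, hε0, hεle1, hεle2⟩ :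
      ∃ ε : ℝ, 0 < ε ∧ ε ≤ (X - c) / (2 * l₀) ∧ ε ≤ (tmax - tlow) / 2 :=
    ⟨min ((X - c) / (2 * l₀)) ((tmax - tlow) / 2),
      lt_min (by positivity) (by linarith), min_le_left _ _, min_le_right _ _⟩
  set t₂ := tmax - ε with ht₂_def
  clear_value t₂
  have ht₂ : tlow < t₂ ∧ t₂ < tmax := by
    constructor
    · rw [ht₂_def]
      linarith
    · rw [ht₂_def]
      linarith
  have hRt₂ : c < R t₂ := by
    have h1 := hRge t₂ (by linarith [ht₂.1, htlow1]) ht₂.2.le l₀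
    have h2 : l₀ * t₂ - Real.log (1 / (J.card : ℝ) * ∑ j ∈ J, a j ^ l₀) = X - l₀ * ε := by
      rw [hX_def, ht₂_def]
      ring
    have h3 : l₀ * ε ≤ (X - c) / 2 := by
      calc l₀ * ε ≤ l₀ * ((X - c) / (2 * l₀)) := mul_le_mul_of_nonneg_left hεle1 hl₀0.le
        _ = (X - c) / 2 := by field_simp
    calc c < X - (X - c) / 2 := by linarith
      _ ≤ X - l₀ * ε := by linarith
      _ = l₀ * t₂ - Real.log (1 / (J.card : ℝ) * ∑ j ∈ J, a j ^ l₀) := h2.symm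
      _ ≤ R t₂ := h1
  -- IVT
  have hsub : Set.Icc tlow t₂ ⊆ Set.Ioo tmin tmax := fun x hx =>
    ⟨lt_of_lt_of_le htlow1 hx.1, lt_of_le_of_lt hx.2 ht₂.2⟩
  have hivt := intermediate_value_Ioo ht₂.1.le (hcont.mono hsub)
  have hcmem : c ∈ Set.Ioo (R tlow) (R t₂) := by
    rw [hRtlow]
    exact ⟨hc0, hRt₂⟩
  obtain ⟨tstar, hts_mem, hts_eq⟩ := hivt hcmem
  have hts_mem' : tstar ∈ Set.Ioo tlow tmax := ⟨hts_mem.1, lt_trans hts_mem.2 ht₂.2⟩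
  -- convex-combination comparison
  have hcomb : ∀ x y : ℝ, tlow < x → x < y → y ≤ tmax →
      ∃ θ : ℝ, 0 < θ ∧ θ < 1 ∧ R x ≤ θ * R tlow + (1 - θ) * R y := by
    intro x y hx hxy hy
    have h0 : (0:ℝ) < y - tlow := by linarith
    refine ⟨(y - x) / (y - tlow), div_pos (by linarith) h0, ?_, ?_⟩
    · rw [div_lt_one h0]
      linarith
    · have hmem1 : tlow ∈ Set.Icc tmin tmax := ⟨htlow1.le, htlow2.le⟩
      have hmem2 : y ∈ Set.Icc tmin tmax := ⟨by linarith, hy⟩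
      have hθnn : 0 ≤ (y - x) / (y - tlow) := (div_pos (by linarith) h0).le
      have hθ1 : 0 ≤ 1 - (y - x) / (y - tlow) := by
        rw [sub_nonneg, div_le_one h0]
        linarith
      have hcx := hconv.2 hmem1 hmem2 hθnn hθ1 (by ring)
      simp only [smul_eq_mul] at hcx
      have he : (y - x) / (y - tlow) * tlow + (1 - (y - x) / (y - tlow)) * y = x := by
        field_simp
        ring
      rwa [he] at hcx
  have huniq : ∀ x y : ℝ, x ∈ Set.Ioo tlow tmax → y ∈ Set.Ioo tlow tmax →
      R x = c → R y = c → x < y → False := by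
    intro x y hx hy hcx hcy hxy
    obtain ⟨θ, hθ0, hθ1, hle⟩ := hcomb x y hx.1 hxy hy.2.le
    rw [hRtlow, hcx, hcy, mul_zero, zero_add] at hle
    have h5 : (1 - θ) * c = c - θ * c := by ring
    rw [h5] at hle
    linarith [mul_pos hθ0 hc0]
  have hcmp : ∀ x : ℝ, x ∈ Set.Ioo tlow tmax → R x = c → tp < x := by
    intro x hx hcx
    by_contra hcon
    push_neg at hcon
    rcases eq_or_lt_of_le hcon with heq | hlt
    · rw [heq] at hcx
      linarith [hRtp_le, hc_phi, hcx.symm.le]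
    · obtain ⟨θ, hθ0, hθ1, hle⟩ := hcomb x tp hx.1 hlt htp2
      rw [hRtlow, mul_zero, zero_add, hcx] at hle
      have h2 : 0 ≤ R tp := hR0 tp htp1 htp2
      have h5 : (1 - θ) * R tp = R tp - θ * R tp := by ring
      rw [h5] at hle
      linarith [mul_nonneg hθ0.le h2, hRtp_le, hc_phi]
  -- assemble
  refine ⟨⟨tstar, ⟨hts_mem', hts_eq⟩, ?_⟩, ?_⟩
  · rintro y ⟨hy, hyc⟩
    by_contra hne
    rcases lt_or_gt_of_ne hne with hlt | hlt
    · exact huniq y tstar hy hts_mem' hyc hts_eq hlt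
    · exact huniq tstar y hts_mem' hy hts_eq hyc hlt
  · intro t ht hRt
    refine ⟨?_, hcmp t ht hRt⟩
    rw [div_lt_iff₀ hu0]
    linarith [hphi, mul_comm tp u]


set_option maxHeartbeats 2000000 in
/-- **Lemma 4.2.** With `t' = (∑_ĵ N_ĵ^{1/γ} log N_ĵ)/(∑_ĵ N_ĵ^{1/γ})`, there is a unique
`t* ∈ (t̲, max_ĵ log N_ĵ)` with `dim_H Λ = dim_B Λ − (1 − γ⁻¹)·I(t*)/log m`, and moreover
`t_1(dim_H Λ) < t' < t*`. -/
theorem statement18 (C : BMData) (hnu : C.NonUniform) (tp : ℝ)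
    (htp : tp = (∑ j ∈ C.cols, (C.colCount j : ℝ) ^ (1 / C.gamma) * Real.log (C.colCount j))
        / (∑ j ∈ C.cols, (C.colCount j : ℝ) ^ (1 / C.gamma))) :
    (∃! tstar : ℝ,
      tstar ∈ Set.Ioo C.tLow (⨆ j : {c // c ∈ C.cols}, Real.log (C.colCount j.1)) ∧
      C.dimH = C.dimB - (1 - C.gamma⁻¹) * C.rate tstar / Real.log C.m) ∧
    (∀ tstar : ℝ,
      tstar ∈ Set.Ioo C.tLow (⨆ j : {c // c ∈ C.cols}, Real.log (C.colCount j.1)) →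
      C.dimH = C.dimB - (1 - C.gamma⁻¹) * C.rate tstar / Real.log C.m →
      C.tseq C.dimH 0 < tp ∧ tp < tstar) := by
  classical
  have hm1 : (1:ℝ) < (C.m : ℝ) := by
    have h := C.two_le_m
    exact_mod_cast (by omega : 1 < C.m)
  have hlm : 0 < Real.log C.m := Real.log_pos hm1
  have hmn' : (C.m : ℝ) < (C.n : ℝ) := by exact_mod_cast C.m_lt_n
  have hln : Real.log C.m < Real.log C.n := Real.log_lt_log (by positivity) hmn'
  have hln0 : 0 < Real.log C.n := lt_trans hlm hln
  set u : ℝ := Real.log C.m / Real.log C.n with hu_def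
  have hu0 : 0 < u := div_pos hlm hln0
  have hu1 : u < 1 := (div_lt_one hln0).mpr hln
  have h1u : (0:ℝ) < 1 - u := by linarith
  have hγ : C.gamma⁻¹ = u := by rw [BMData.gamma, inv_div, hu_def]
  have h1γ : 1 / C.gamma = u := by rw [one_div, hγ]
  have hM2 : 2 ≤ C.cols.card := C.one_lt_cols
  have hMeq : ((C.M : ℝ)) = ((C.cols.card : ℕ) : ℝ) := rfl
  have ha : ∀ j ∈ C.cols, (1:ℝ) ≤ (C.colCount j : ℝ) := by
    intro j hj
    have h1 : 0 < C.colCount j := by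
      obtain ⟨p, hp, rfl⟩ := Finset.mem_image.mp hj
      exact Finset.card_pos.mpr ⟨p, Finset.mem_filter.mpr ⟨hp, rfl⟩⟩
    exact_mod_cast h1
  have hnu' : ∃ i ∈ C.cols, ∃ k ∈ C.cols, (C.colCount i : ℝ) ≠ (C.colCount k : ℝ) := by
    obtain ⟨i, hi, k, hk, hik⟩ := hnu
    exact ⟨i, hi, k, hk, fun h => hik (by exact_mod_cast h)⟩
  have hN : (C.N : ℝ) = ∑ j ∈ C.cols, (C.colCount j : ℝ) := by
    have h0 : C.N = ∑ j ∈ C.cols, C.colCount j :=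
      Finset.card_eq_sum_card_fiberwise (fun p hp => Finset.mem_image_of_mem Prod.fst hp)
    rw [h0]
    push_cast
    rfl
  -- the maximum of the logs of the column counts
  have hsne : Nonempty {c // c ∈ C.cols} := by
    obtain ⟨x, hx⟩ := Finset.card_pos.mp (by omega : 0 < C.cols.card)
    exact ⟨⟨x, hx⟩⟩
  have hbddJ : BddAbove (Set.range fun j : {c // c ∈ C.cols} => Real.log (C.colCount j.1)) :=
    Set.Finite.bddAbove (Set.finite_range _)
  set tmax := ⨆ j : {c // c ∈ C.cols}, Real.log (C.colCount j.1) with htmax_def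
  have htmax_ub : ∀ j ∈ C.cols, Real.log (C.colCount j : ℝ) ≤ tmax := fun j hj =>
    le_ciSup hbddJ ⟨j, hj⟩
  have hattain : ∃ j0 ∈ C.cols, Real.log (C.colCount j0 : ℝ) = tmax := by
    obtain ⟨⟨j0, hj0⟩, hmax⟩ :=
      Finite.exists_max (fun j : {c // c ∈ C.cols} => Real.log (C.colCount j.1))
    exact ⟨j0, hj0, le_antisymm (htmax_ub j0 hj0) (ciSup_le hmax)⟩
  set Su := ∑ j ∈ C.cols, (C.colCount j : ℝ) ^ u with hSu_def
  set c := (u * Real.log (∑ j ∈ C.cols, (C.colCount j : ℝ))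
      + (1 - u) * Real.log ((C.cols.card : ℕ) : ℝ) - Real.log Su) / (1 - u) with hc_def
  have hkey : C.dimB - C.dimH = (1 - u) * c / Real.log C.m := by
    have h1 : (1 - u) * c = u * Real.log (∑ j ∈ C.cols, (C.colCount j : ℝ))
        + (1 - u) * Real.log ((C.cols.card : ℕ) : ℝ) - Real.log Su := by
      rw [hc_def]
      field_simp
    have h2 : (C.dimB - C.dimH) * Real.log C.m = (1 - u) * c := by
      rw [h1, BMData.dimB, BMData.dimH, ← hu_def, ← hSu_def, hN, hMeq, hu_def]
      field_simp
    rw [← h2, mul_div_cancel_right₀ _ hlm.ne']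
  have hiff : ∀ r : ℝ, (C.dimH = C.dimB - (1 - C.gamma⁻¹) * r / Real.log C.m) ↔ r = c := by
    intro r
    rw [hγ]
    constructor
    · intro h
      have h2 : (1 - u) * r / Real.log C.m = (1 - u) * c / Real.log C.m := by
        rw [← hkey]
        linarith
      exact mul_left_cancel₀ h1u.ne' ((div_left_inj' hlm.ne').mp h2)
    · intro h
      rw [h]
      linarith [hkey]
  have htseq : C.tseq C.dimH 0 = (Real.log Su - Real.log ((C.cols.card : ℕ) : ℝ)) / u := by
    have h0 : C.tseq C.dimH 0 = (C.dimH - Real.log C.M / Real.log C.m) * Real.log C.n := rfl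
    rw [h0, BMData.dimH, ← hu_def, ← hSu_def, hMeq, hu_def,
      eq_div_iff (div_pos hlm hln0).ne']
    field_simp
  have hcore := aux_core C.cols (fun j => (C.colCount j : ℝ)) C.rate u tp c tmax ha hM2 hnu'
    hu0 hu1 (fun t => rfl) (by rw [htp, h1γ]) (by rw [hc_def, hSu_def]) htmax_ub hattain
  obtain ⟨⟨t0, ⟨ht0mem, ht0c⟩, ht0uniq⟩, hpart2⟩ := hcore
  constructor
  · refine ⟨t0, ⟨ht0mem, (hiff _).mpr ht0c⟩, ?_⟩
    rintro y ⟨hy1, hy2⟩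
    exact ht0uniq y ⟨hy1, (hiff _).mp hy2⟩
  · intro tstar hmem heq
    obtain ⟨hlt1, hlt2⟩ := hpart2 tstar hmem ((hiff _).mp heq)
    refine ⟨?_, hlt2⟩
    rw [htseq]
    exact hlt1
end
end
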